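/- arXiv:2010.01381 — 6 statements merged into one kernel-verified Lean document; each statement's English description precedes it below -/
import Mathlib

section
/- Let t_{k−1} < t_k < t_{k+1} be reals, τ_{k−1} = t_k − t_{k−1}, τ_k = t_{k+1} − t_k. Let ε_{k−1}⁺, ε_k⁻, ε_k⁺, ε_{k+1}⁻, M_{k−1}, M_k, M_{k+1}, ṙ_k, r̈_k, r̈_{k+1} be reals. Let c_{k−1} be the cubic with data (endpoint values ε_{k−1}⁺, ε_k⁻ and endpoint second derivatives M_{k−1}, M_k + r̈_k) on [t_{k−1}, t_k], and let c_k be the cubic with data (endpoint values ε_k⁺, ε_{k+1}⁻ and endpoint second derivatives M_k, M_{k+1} + r̈_{k+1}) on [t_k, t_{k+1}]. Then the first-derivative matching condition c'_{k−1}(t_k) = c'_k(t_k) + ṙ_k holds if and only if μ_k M_{k−1} + 2 M_k + λ_k M_{k+1} = d_k, where μ_k = τ_{k−1}/(τ_{k−1}+τ_k), λ_k = τ_k/(τ_{k−1}+τ_k), and d_k = 6·((ε_{k+1}⁻ − ε_k⁺)/τ_k − (ε_k⁻ − ε_{k−1}⁺)/τ_{k−1})/(τ_{k−1}+τ_k)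 + (6ṙ_k − 2r̈_k τ_{k−1} − r̈_{k+1} τ_k)/(τ_{k−1}+τ_k). -/
/-- The cubic with data (endpoint values `εp, εm` and endpoint second derivatives `M, M'`)
on `[a, b]`:
`c(t) = ((M̂ − M)/(6τ))(t − a)³ + (M/2)(t − a)² + ((ε⁻ − ε⁺)/τ − τ(M̂ + 2M)/6)(t − a) + ε⁺`
with `τ = b − a`. -/
noncomputable def cubicWith (a b εp εm M M' : ℝ) : ℝ → ℝ := fun t =>
  ((M' - M) / (6 * (b - a))) * (t - a) ^ 3 + (M / 2) * (t - a) ^ 2 +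
    ((εm - εp) / (b - a) - (b - a) * (M' + 2 * M) / 6) * (t - a) + εp

lemma cubicWith_deriv (a b εp εm M M' t : ℝ) :
    deriv (cubicWith a b εp εm M M') t =
      ((M' - M) / (6 * (b - a))) * (3 * (t - a) ^ 2) + (M / 2) * (2 * (t - a)) +
        ((εm - εp) / (b - a) - (b - a) * (M' + 2 * M) / 6) := by
  have h : HasDerivAt (cubicWith a b εp εm M M')
      (((M' - M) / (6 * (b - a))) * (3 * (t - a) ^ 2) + (M / 2) * (2 * (t - a)) +
        ((εm - εp) / (b - a) - (b - a) * (M' + 2 * M) / 6)) t := by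
    unfold cubicWith
    have hid : HasDerivAt (fun x : ℝ => x - a) 1 t := (hasDerivAt_id t).sub_const a
    have h3 : HasDerivAt (fun x : ℝ => (x - a) ^ 3) (3 * (t - a) ^ 2) t := by
      simpa using hid.fun_pow 3
    have h2 : HasDerivAt (fun x : ℝ => (x - a) ^ 2) (2 * (t - a)) t := by
      simpa using hid.fun_pow 2
    have := (((h3.const_mul ((M' - M) / (6 * (b - a)))).add
      (h2.const_mul (M / 2))).add
      (hid.const_mul ((εm - εp) / (b - a) - (b - a) * (M' + 2 * M) / 6))).add_const εp
    refine this.congr_deriv ?_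
    ring
  exact h.deriv


set_option maxHeartbeats 1600000 in
/-- the first-derivative matching condition
`c'_{k−1}(t_k) = c'_k(t_k) + ṙ_k` holds iff `μ_k M_{k−1} + 2 M_k + λ_k M_{k+1} = d_k`. -/
theorem cssc_tridiagonal_row (tkm1 tk tk1 : ℝ) (h1 : tkm1 < tk) (h2 : tk < tk1)
    (εpkm1 εmk εpk εmk1 Mkm1 Mk Mk1 rd rdd_k rdd_k1 : ℝ) :
    (deriv (cubicWith tkm1 tk εpkm1 εmk Mkm1 (Mk + rdd_k)) tk =
        deriv (cubicWith tk tk1 εpk εmk1 Mk (Mk1 + rdd_k1)) tk + rd) ↔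
      ((tk - tkm1) / ((tk - tkm1) + (tk1 - tk))) * Mkm1 + 2 * Mk +
          ((tk1 - tk) / ((tk - tkm1) + (tk1 - tk))) * Mk1 =
        6 * ((εmk1 - εpk) / (tk1 - tk) - (εmk - εpkm1) / (tk - tkm1)) /
            ((tk - tkm1) + (tk1 - tk)) +
          (6 * rd - 2 * rdd_k * (tk - tkm1) - rdd_k1 * (tk1 - tk)) /
            ((tk - tkm1) + (tk1 - tk)) := by
  have ha : tk - tkm1 ≠ 0 := by linarith
  have hb : tk1 - tk ≠ 0 := by linarith
  have hc : (tk - tkm1) + (tk1 - tk) ≠ 0 := by linarith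
  rw [cubicWith_deriv, cubicWith_deriv]
  have hd : tk1 - tkm1 ≠ 0 := by linarith
  rw [show tk - tk = 0 by ring]
  field_simp
  constructor <;> intro h
  · have h72 : (72 : ℝ) * (tk - tkm1) ≠ 0 := by positivity
    apply mul_left_cancel₀ h72
    linear_combination (72 * (tk - tkm1)) * h
  · apply mul_left_cancel₀ (pow_ne_zero 2 hd)
    linear_combination (tk1 - tkm1) ^ 2 * h
end

section
/- Let a = t_0 < t_1 < … < t_n = b be a partition of [a, b] with maximum spacing τ = max_k (t_k − t_{k−1}), and let K ≥ 0. Let e : [a, b] → ℝ be twice continuously differentiable on [a, b], and suppose that on each open subinterval (t_{k−1}, t_k) the function e is four times differentiable with |e⁗(t)| ≤ K for all t in each open subinterval. Assume e(t_k) = 0 for all 0 ≤ k ≤ n, and e''(a) = e''(b) = 0. Then |e'(t_k)| ≤ (1/24)·K·τ³ for every 0 ≤ k ≤ n. -/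
open Set MeasureTheory intervalIntegral

lemma kernel_bound {c d K : ℝ} (hcd : c < d) (hK : 0 ≤ K)
    {f f1 f2 f3 f4 : ℝ → ℝ} {k k1 k2 : ℝ → ℝ} {k3 : ℝ}
    (hk : ∀ x, HasDerivAt k (k1 x) x) (hk1 : ∀ x, HasDerivAt k1 (k2 x) x)
    (hk2 : ∀ x, HasDerivAt k2 k3 x)
    (hkc : k c = 0) (hkd : k d = 0)
    (hkpos : ∀ x ∈ Set.Ioc c d, 0 ≤ k x)
    (hf : ContinuousOn f (Set.Icc c d)) (hf1 : ContinuousOn f1 (Set.Icc c d))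
    (hf2 : ContinuousOn f2 (Set.Icc c d))
    (hdf : ∀ x ∈ Set.Ioo c d, HasDerivAt f (f1 x) x)
    (hdf1 : ∀ x ∈ Set.Ioo c d, HasDerivAt f1 (f2 x) x)
    (hdf2 : ∀ x ∈ Set.Ioo c d, HasDerivAt f2 (f3 x) x)
    (hdf3 : ∀ x ∈ Set.Ioo c d, HasDerivAt f3 (f4 x) x)
    (hb : ∀ x ∈ Set.Ioo c d, |f4 x| ≤ K) :
    |(k2 d * f1 d - k1 d * f2 d - k3 * f d) - (k2 c * f1 c - k1 c * f2 c - k3 * f c)|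
      ≤ K * ∫ s in c..d, k s := by
  have hkcont : Continuous k := by
    rw [continuous_iff_continuousAt]; exact fun x => (hk x).continuousAt
  have hk1cont : Continuous k1 := by
    rw [continuous_iff_continuousAt]; exact fun x => (hk1 x).continuousAt
  have hk2cont : Continuous k2 := by
    rw [continuous_iff_continuousAt]; exact fun x => (hk2 x).continuousAt
  set m := (c + d) / 2 with hm
  have hmIoo : m ∈ Set.Ioo c d := by constructor <;> simp [hm] <;> linarith
  -- boundedness of f3 on Ioo
  set M := |f3 m| + K * (d - c) with hMdef
  have hM0 : 0 ≤ M := by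
    have : 0 ≤ K * (d - c) := mul_nonneg hK (by linarith)
    have := abs_nonneg (f3 m); linarith
  have hf3bd : ∀ x ∈ Set.Ioo c d, |f3 x| ≤ M := by
    intro x hx
    have h1 := (convex_Ioo c d).norm_image_sub_le_of_norm_hasDerivWithin_le
      (f' := f4) (fun y hy => (hdf3 y hy).hasDerivWithinAt)
      (fun y hy => by simpa [Real.norm_eq_abs] using hb y hy) hmIoo hx
    have h2 : |f3 x - f3 m| ≤ K * |x - m| := by simpa [Real.norm_eq_abs] using h1
    have h3 : |x - m| ≤ d - c := by
      rw [abs_le]; obtain ⟨hx1, hx2⟩ := hx; obtain ⟨hm1, hm2⟩ := hmIoo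
      constructor <;> linarith
    have h4 : |f3 x| ≤ |f3 m| + |f3 x - f3 m| := by
      have := abs_add_le (f3 m) (f3 x - f3 m); simpa using this
    have h5 : K * |x - m| ≤ K * (d - c) := mul_le_mul_of_nonneg_left h3 hK
    linarith
  -- pointwise bound |k y * f3 y| ≤ M * |k y| on Icc
  have hbd : ∀ y ∈ Set.Icc c d, |k y * f3 y| ≤ M * |k y| := by
    intro y hy
    rcases eq_or_lt_of_le hy.1 with h | h
    · rw [← h, hkc]; simp
    rcases eq_or_lt_of_le hy.2 with h' | h'
    · rw [h', hkd]; simp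
    have := hf3bd y ⟨h, h'⟩
    rw [abs_mul, mul_comm]
    exact mul_le_mul_of_nonneg_right this (abs_nonneg _)
  -- the function G
  set G : ℝ → ℝ := fun x => k x * f3 x - k1 x * f2 x + k2 x * f1 x - k3 * f x with hG
  have hG' : ∀ x ∈ Set.Ioo c d, HasDerivAt G (k x * f4 x) x := by
    intro x hx
    have h1 : HasDerivAt (fun y => k y * f3 y) (k1 x * f3 x + k x * f4 x) x :=
      (hk x).mul (hdf3 x hx)
    have h2 : HasDerivAt (fun y => k1 y * f2 y) (k2 x * f2 x + k1 x * f3 x) x :=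
      (hk1 x).mul (hdf2 x hx)
    have h3 : HasDerivAt (fun y => k2 y * f1 y) (k3 * f1 x + k2 x * f2 x) x :=
      (hk2 x).mul (hdf1 x hx)
    have h4 : HasDerivAt (fun y => k3 * f y) (k3 * f1 x) x := (hdf x hx).const_mul k3
    have : HasDerivAt _ _ x := ((h1.sub h2).add h3).sub h4
    exact this.congr_deriv (by ring)
  -- continuity of k * f3 at endpoints within Icc
  have hkf3 : ∀ p, k p = 0 → ContinuousWithinAt (fun y => k y * f3 y) (Set.Icc c d) p := by
    intro p hkp
    have hval : k p * f3 p = 0 := by rw [hkp, zero_mul]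
    have htend : Filter.Tendsto (fun y => k y * f3 y) (nhdsWithin p (Set.Icc c d)) (nhds 0) := by
      rw [tendsto_zero_iff_norm_tendsto_zero]
      apply squeeze_zero' (g := fun y => M * |k y|)
      · exact Filter.Eventually.of_forall fun y => norm_nonneg _
      · filter_upwards [self_mem_nhdsWithin] with y hy
        simpa only [Real.norm_eq_abs] using hbd y hy
      · have h0 : Filter.Tendsto (fun y => M * |k y|) (nhds p) (nhds (M * |k p|)) :=
          (continuous_const.mul hkcont.abs).tendsto p
        rw [hkp, abs_zero, mul_zero] at h0
        exact h0.mono_left nhdsWithin_le_nhds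
    have : ContinuousWithinAt (fun y => k y * f3 y) (Set.Icc c d) p := by
      unfold ContinuousWithinAt
      rw [show (fun y => k y * f3 y) p = 0 from hval]
      exact htend
    exact this
  -- continuity of G on Icc
  have hGcont : ContinuousOn G (Set.Icc c d) := by
    intro x hx
    rcases eq_or_lt_of_le hx.1 with h | h
    case inl =>
      have h1 := hkf3 c hkc
      rw [← h]
      exact ((h1.sub ((hk1cont.continuousAt.continuousWithinAt).mul (hf2 c (Set.left_mem_Icc.2 hcd.le)))).add
        ((hk2cont.continuousAt.continuousWithinAt).mul (hf1 c (Set.left_mem_Icc.2 hcd.le)))).sub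
        ((continuousWithinAt_const).mul (hf c (Set.left_mem_Icc.2 hcd.le)))
    rcases eq_or_lt_of_le hx.2 with h' | h'
    case inl =>
      have h1 := hkf3 d hkd
      rw [h']
      exact ((h1.sub ((hk1cont.continuousAt.continuousWithinAt).mul (hf2 d (Set.right_mem_Icc.2 hcd.le)))).add
        ((hk2cont.continuousAt.continuousWithinAt).mul (hf1 d (Set.right_mem_Icc.2 hcd.le)))).sub
        ((continuousWithinAt_const).mul (hf d (Set.right_mem_Icc.2 hcd.le)))
    case inr =>
      exact ((hG' x ⟨h, h'⟩).continuousAt).continuousWithinAt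
  -- a.e. membership in Ioo
  have haeIoo : ∀ᵐ s ∂(volume.restrict (Set.Ioc c d)), s ∈ Set.Ioo c d := by
    have hd0 : (volume : Measure ℝ) {d} = 0 := Real.volume_singleton
    have h1 : ∀ᵐ s ∂(volume.restrict (Set.Ioc c d)), s ≠ d := by
      refine (MeasureTheory.ae_restrict_of_ae ?_)
      rw [MeasureTheory.ae_iff]
      simpa using hd0
    have h2 : ∀ᵐ s ∂(volume.restrict (Set.Ioc c d)), s ∈ Set.Ioc c d :=
      MeasureTheory.ae_restrict_mem measurableSet_Ioc
    filter_upwards [h1, h2] with s hs1 hs2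
    exact ⟨hs2.1, lt_of_le_of_ne hs2.2 hs1⟩
  -- integrability of k * f4 on [c, d]
  obtain ⟨Ck, hCk⟩ := isCompact_Icc.exists_bound_of_continuousOn (hkcont.continuousOn : ContinuousOn k (Set.Icc c d))
  have hCk0 : 0 ≤ Ck := le_trans (norm_nonneg _) (hCk c (Set.left_mem_Icc.2 hcd.le))
  have hint : IntervalIntegrable (fun s => k s * f4 s) volume c d := by
    rw [intervalIntegrable_iff, uIoc_of_le hcd.le]
    apply MeasureTheory.Integrable.mono' (g := fun _ => Ck * K)
      (MeasureTheory.integrableOn_const measure_Ioc_lt_top.ne)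
    · have hmeas : Measurable fun s => k s * deriv f3 s :=
        hkcont.measurable.mul (measurable_deriv f3)
      apply hmeas.aestronglyMeasurable.congr
      filter_upwards [haeIoo] with s hs
      rw [(hdf3 s hs).deriv]
    · filter_upwards [haeIoo] with s hs
      rw [Real.norm_eq_abs, abs_mul]
      exact mul_le_mul (by simpa [Real.norm_eq_abs] using hCk s (Set.mem_Icc_of_Ioo hs))
        (hb s hs) (abs_nonneg _) hCk0
  -- FTC
  have hftc : ∫ s in c..d, k s * f4 s = G d - G c :=
    integral_eq_sub_of_hasDerivAt_of_le hcd.le hGcont hG' hint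
  -- bound the integral
  have hkint : IntervalIntegrable (fun s => K * k s) volume c d :=
    (continuous_const.mul hkcont).intervalIntegrable c d
  have hbound : ‖∫ s in c..d, k s * f4 s‖ ≤ |∫ s in c..d, K * k s| := by
    apply intervalIntegral.norm_integral_le_abs_of_norm_le _ hkint
    rw [uIoc_of_le hcd.le]
    filter_upwards [haeIoo] with s hs
    rw [Real.norm_eq_abs, abs_mul, abs_of_nonneg (hkpos s (Set.mem_Ioc_of_Ioo hs)), mul_comm]
    exact mul_le_mul_of_nonneg_right (hb s hs) (hkpos s (Set.mem_Ioc_of_Ioo hs))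
  have hknn : 0 ≤ ∫ s in c..d, k s := by
    apply intervalIntegral.integral_nonneg hcd.le
    intro u hu
    rcases eq_or_lt_of_le hu.1 with h | h
    · rw [← h, hkc]
    · exact hkpos u ⟨h, hu.2⟩
  have hval2 : |∫ s in c..d, K * k s| = K * ∫ s in c..d, k s := by
    rw [intervalIntegral.integral_const_mul, abs_of_nonneg (mul_nonneg hK hknn)]
  have hfinal : |G d - G c| ≤ K * ∫ s in c..d, k s := by
    rw [← hftc, ← hval2]
    simpa [Real.norm_eq_abs] using hbound
  have hGdGc : G d - G c = (k2 d * f1 d - k1 d * f2 d - k3 * f d) - (k2 c * f1 c - k1 c * f2 c - k3 * f c) := by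
    simp only [hG]
    rw [hkc, hkd]
    ring
  rw [← hGdGc]
  exact hfinal

lemma rel_left {c d K : ℝ} (hcd : c < d) (hK : 0 ≤ K)
    {f f1 f2 f3 f4 : ℝ → ℝ}
    (hf : ContinuousOn f (Set.Icc c d)) (hf1 : ContinuousOn f1 (Set.Icc c d))
    (hf2 : ContinuousOn f2 (Set.Icc c d))
    (hdf : ∀ x ∈ Set.Ioo c d, HasDerivAt f (f1 x) x)
    (hdf1 : ∀ x ∈ Set.Ioo c d, HasDerivAt f1 (f2 x) x)
    (hdf2 : ∀ x ∈ Set.Ioo c d, HasDerivAt f2 (f3 x) x)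
    (hdf3 : ∀ x ∈ Set.Ioo c d, HasDerivAt f3 (f4 x) x)
    (hb : ∀ x ∈ Set.Ioo c d, |f4 x| ≤ K) :
    |2 * f1 c + f1 d - 3 * (f d - f c) / (d - c) + ((d - c) / 2) * f2 c|
      ≤ K * (d - c) ^ 3 / 24 := by
  have hne : d - c ≠ 0 := by linarith
  have hd1 : ∀ x : ℝ, HasDerivAt (fun s : ℝ => d - s) (-1) x := fun x =>
    (hasDerivAt_id x).const_sub d
  have hd2 : ∀ x : ℝ, HasDerivAt (fun s : ℝ => s - c) 1 x := fun x =>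
    (hasDerivAt_id x).sub_const c
  set k : ℝ → ℝ := fun s => (d - s) ^ 2 * (s - c) / (2 * (d - c)) with hkdef
  set k1 : ℝ → ℝ := fun s => ((d - s) ^ 2 - 2 * ((d - s) * (s - c))) / (2 * (d - c)) with hk1def
  set k2 : ℝ → ℝ := fun s => (2 * (s - c) - 4 * (d - s)) / (2 * (d - c)) with hk2def
  set k3 : ℝ := 6 / (2 * (d - c)) with hk3def
  have hk : ∀ x, HasDerivAt k (k1 x) x := by
    intro x
    have : HasDerivAt _ _ x := (((hd1 x).pow 2).mul (hd2 x)).div_const (2 * (d - c))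
    exact this.congr_deriv (by simp only [hk1def, Pi.pow_apply, Pi.mul_apply, Pi.sub_apply, Pi.add_apply, Pi.neg_apply]; norm_num; ring)
  have hk1 : ∀ x, HasDerivAt k1 (k2 x) x := by
    intro x
    have : HasDerivAt _ _ x := (((hd1 x).pow 2).sub (((hd1 x).mul (hd2 x)).const_mul 2)).div_const (2 * (d - c))
    exact this.congr_deriv (by simp only [hk2def, Pi.pow_apply, Pi.mul_apply, Pi.sub_apply, Pi.add_apply, Pi.neg_apply]; norm_num; ring)
  have hk2 : ∀ x, HasDerivAt k2 k3 x := by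
    intro x
    have : HasDerivAt _ _ x := (((hd2 x).const_mul 2).sub ((hd1 x).const_mul 4)).div_const (2 * (d - c))
    exact this.congr_deriv (by simp only [hk3def, Pi.pow_apply, Pi.mul_apply, Pi.sub_apply, Pi.add_apply, Pi.neg_apply]; norm_num)
  have hkc : k c = 0 := by simp only [hkdef]; ring
  have hkd : k d = 0 := by simp only [hkdef]; ring
  have hkpos : ∀ x ∈ Set.Ioc c d, 0 ≤ k x := by
    intro x hx
    apply div_nonneg (mul_nonneg (sq_nonneg _) (by linarith [hx.1])) (by linarith)
  have hkint : ∫ s in c..d, k s = (d - c) ^ 3 / 24 := by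
    have hA : ∀ x ∈ Set.uIcc c d,
        HasDerivAt (fun s => (-(d - s) ^ 3 * (s - c) / 3 - (d - s) ^ 4 / 12) / (2 * (d - c)))
          (k x) x := by
      intro x _
      have : HasDerivAt _ _ x := ((((((hd1 x).pow 3).neg.mul (hd2 x))).div_const 3).sub
        (((hd1 x).pow 4).div_const 12)).div_const (2 * (d - c))
      exact this.congr_deriv (by simp only [hkdef, Pi.pow_apply, Pi.mul_apply, Pi.sub_apply, Pi.add_apply, Pi.neg_apply]; norm_num; ring)
    have hkcont : Continuous k := by
      apply Continuous.div_const
      exact ((continuous_const.sub continuous_id).pow 2).mul (continuous_id.sub continuous_const)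
    rw [intervalIntegral.integral_eq_sub_of_hasDerivAt hA (hkcont.intervalIntegrable c d)]
    field_simp
    ring
  have key := kernel_bound hcd hK hk hk1 hk2 hkc hkd hkpos hf hf1 hf2 hdf hdf1 hdf2 hdf3 hb
  rw [hkint] at key
  have heq : (k2 d * f1 d - k1 d * f2 d - k3 * f d) - (k2 c * f1 c - k1 c * f2 c - k3 * f c)
      = 2 * f1 c + f1 d - 3 * (f d - f c) / (d - c) + ((d - c) / 2) * f2 c := by
    simp only [hk1def, hk2def, hk3def]
    field_simp
    ring
  rw [heq] at key
  calc |2 * f1 c + f1 d - 3 * (f d - f c) / (d - c) + ((d - c) / 2) * f2 c|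
      ≤ K * ((d - c) ^ 3 / 24) := key
    _ = K * (d - c) ^ 3 / 24 := by ring

lemma rel_right {c d K : ℝ} (hcd : c < d) (hK : 0 ≤ K)
    {f f1 f2 f3 f4 : ℝ → ℝ}
    (hf : ContinuousOn f (Set.Icc c d)) (hf1 : ContinuousOn f1 (Set.Icc c d))
    (hf2 : ContinuousOn f2 (Set.Icc c d))
    (hdf : ∀ x ∈ Set.Ioo c d, HasDerivAt f (f1 x) x)
    (hdf1 : ∀ x ∈ Set.Ioo c d, HasDerivAt f1 (f2 x) x)
    (hdf2 : ∀ x ∈ Set.Ioo c d, HasDerivAt f2 (f3 x) x)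
    (hdf3 : ∀ x ∈ Set.Ioo c d, HasDerivAt f3 (f4 x) x)
    (hb : ∀ x ∈ Set.Ioo c d, |f4 x| ≤ K) :
    |f1 c + 2 * f1 d - 3 * (f d - f c) / (d - c) - ((d - c) / 2) * f2 d|
      ≤ K * (d - c) ^ 3 / 24 := by
  have hne : d - c ≠ 0 := by linarith
  have hd1 : ∀ x : ℝ, HasDerivAt (fun s : ℝ => d - s) (-1) x := fun x =>
    (hasDerivAt_id x).const_sub d
  have hd2 : ∀ x : ℝ, HasDerivAt (fun s : ℝ => s - c) 1 x := fun x =>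
    (hasDerivAt_id x).sub_const c
  set k : ℝ → ℝ := fun s => (s - c) ^ 2 * (d - s) / (2 * (d - c)) with hkdef
  set k1 : ℝ → ℝ := fun s => (2 * ((s - c) * (d - s)) - (s - c) ^ 2) / (2 * (d - c)) with hk1def
  set k2 : ℝ → ℝ := fun s => (2 * (d - s) - 4 * (s - c)) / (2 * (d - c)) with hk2def
  set k3 : ℝ := -6 / (2 * (d - c)) with hk3def
  have hk : ∀ x, HasDerivAt k (k1 x) x := by
    intro x
    have : HasDerivAt _ _ x := (((hd2 x).pow 2).mul (hd1 x)).div_const (2 * (d - c))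
    exact this.congr_deriv (by simp only [hk1def, Pi.pow_apply, Pi.mul_apply, Pi.sub_apply, Pi.add_apply, Pi.neg_apply]; norm_num; ring)
  have hk1 : ∀ x, HasDerivAt k1 (k2 x) x := by
    intro x
    have : HasDerivAt _ _ x := ((((hd2 x).mul (hd1 x)).const_mul 2).sub ((hd2 x).pow 2)).div_const (2 * (d - c))
    exact this.congr_deriv (by simp only [hk2def, Pi.pow_apply, Pi.mul_apply, Pi.sub_apply, Pi.add_apply, Pi.neg_apply]; norm_num; ring)
  have hk2 : ∀ x, HasDerivAt k2 k3 x := by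
    intro x
    have : HasDerivAt _ _ x := (((hd1 x).const_mul 2).sub ((hd2 x).const_mul 4)).div_const (2 * (d - c))
    exact this.congr_deriv (by simp only [hk3def, Pi.pow_apply, Pi.mul_apply, Pi.sub_apply, Pi.add_apply, Pi.neg_apply]; norm_num)
  have hkc : k c = 0 := by simp only [hkdef]; ring
  have hkd : k d = 0 := by simp only [hkdef]; ring
  have hkpos : ∀ x ∈ Set.Ioc c d, 0 ≤ k x := by
    intro x hx
    apply div_nonneg (mul_nonneg (sq_nonneg _) (by linarith [hx.2])) (by linarith)
  have hkint : ∫ s in c..d, k s = (d - c) ^ 3 / 24 := by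
    have hA : ∀ x ∈ Set.uIcc c d,
        HasDerivAt (fun s => ((s - c) ^ 3 * (d - s) / 3 + (s - c) ^ 4 / 12) / (2 * (d - c)))
          (k x) x := by
      intro x _
      have : HasDerivAt _ _ x := (((((hd2 x).pow 3).mul (hd1 x)).div_const 3).add
        (((hd2 x).pow 4).div_const 12)).div_const (2 * (d - c))
      exact this.congr_deriv (by simp only [hkdef, Pi.pow_apply, Pi.mul_apply, Pi.sub_apply, Pi.add_apply, Pi.neg_apply]; norm_num; ring)
    have hkcont : Continuous k := by
      apply Continuous.div_const
      exact ((continuous_id.sub continuous_const).pow 2).mul (continuous_const.sub continuous_id)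
    rw [intervalIntegral.integral_eq_sub_of_hasDerivAt hA (hkcont.intervalIntegrable c d)]
    field_simp
    ring
  have key := kernel_bound hcd hK hk hk1 hk2 hkc hkd hkpos hf hf1 hf2 hdf hdf1 hdf2 hdf3 hb
  rw [hkint] at key
  have heq : (k2 d * f1 d - k1 d * f2 d - k3 * f d) - (k2 c * f1 c - k1 c * f2 c - k3 * f c)
      = -(f1 c + 2 * f1 d - 3 * (f d - f c) / (d - c) - ((d - c) / 2) * f2 d) := by
    simp only [hk1def, hk2def, hk3def]
    field_simp
    ring
  rw [heq, abs_neg] at key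
  calc |f1 c + 2 * f1 d - 3 * (f d - f c) / (d - c) - ((d - c) / 2) * f2 d|
      ≤ K * ((d - c) ^ 3 / 24) := key
    _ = K * (d - c) ^ 3 / 24 := by ring

set_option maxHeartbeats 1000000 in
/-- Hall–Meyer Lemma, r = 1 case: if `e` is `C²` on `[a,b] = [t_0, t_n]`,
four times differentiable with `|e⁗| ≤ K` on each open subinterval of the partition,
vanishes at all knots, and satisfies the natural boundary condition `e''(a) = e''(b) = 0`,
then `|e'(t_k)| ≤ (1/24)·K·τ³` at every knot, where `τ` bounds the knot spacings. -/
theorem hall_meyer_first_deriv_knot_bound (n : ℕ) (hn : 1 ≤ n) (t : ℕ → ℝ)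
    (ht : ∀ k, 1 ≤ k → k ≤ n → t (k - 1) < t k)
    (τ : ℝ) (hτ : ∀ k, 1 ≤ k → k ≤ n → t k - t (k - 1) ≤ τ)
    (K : ℝ) (hK : 0 ≤ K) (e : ℝ → ℝ)
    (hC2 : ContDiffOn ℝ 2 e (Set.Icc (t 0) (t n)))
    (hdiff4 : ∀ k, 1 ≤ k → k ≤ n → ∀ s ∈ Set.Ioo (t (k - 1)) (t k),
      (∀ i < 4, DifferentiableAt ℝ (deriv^[i] e) s) ∧ |deriv^[4] e s| ≤ K)
    (hknots : ∀ k ≤ n, e (t k) = 0)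
    (hbda : iteratedDerivWithin 2 e (Set.Icc (t 0) (t n)) (t 0) = 0)
    (hbdb : iteratedDerivWithin 2 e (Set.Icc (t 0) (t n)) (t n) = 0) :
    ∀ k ≤ n, |derivWithin e (Set.Icc (t 0) (t n)) (t k)| ≤ (1 / 24) * K * τ ^ 3 := by
  set I : Set ℝ := Set.Icc (t 0) (t n) with hIdef
  -- monotonicity of knots
  have hmono : ∀ j, j ≤ n → ∀ i, i ≤ j → t i ≤ t j := by
    intro j
    induction j with
    | zero => intro _ i hi; rw [Nat.le_zero.mp hi]
    | succ m ih =>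
      intro hm i hi
      have hstep : t m < t (m + 1) := by
        have h1 := ht (m + 1) (Nat.succ_le_succ (Nat.zero_le m)) hm
        simpa using h1
      rcases Nat.eq_or_lt_of_le hi with h | h
      · rw [h]
      · have h1 : i ≤ m := Nat.lt_succ_iff.mp h
        have h2 := ih (le_trans (Nat.le_succ m) hm) i h1
        linarith
  have hab : t 0 < t n := by
    have h1 := ht n hn le_rfl
    have h2 : t 0 ≤ t (n - 1) := hmono (n - 1) (Nat.sub_le n 1) 0 (Nat.zero_le _)
    linarith
  have hUD : UniqueDiffOn ℝ I := uniqueDiffOn_Icc hab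
  set f1 : ℝ → ℝ := derivWithin e I with hf1def
  set f2 : ℝ → ℝ := iteratedDerivWithin 2 e I with hf2def
  -- identification on the interior
  have hf1open : ∀ x ∈ Set.Ioo (t 0) (t n), f1 x = deriv e x := by
    intro x hx
    exact derivWithin_of_mem_nhds (Icc_mem_nhds hx.1 hx.2)
  have hf2open : ∀ x ∈ Set.Ioo (t 0) (t n), f2 x = deriv (deriv e) x := by
    intro x hx
    have hmem : x ∈ I := Set.mem_Icc_of_Ioo hx
    have h1 : f2 x = derivWithin (iteratedDerivWithin 1 e I) I x :=
      congrFun iteratedDerivWithin_succ x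
    have h2 : derivWithin (iteratedDerivWithin 1 e I) I x
        = deriv (iteratedDerivWithin 1 e I) x :=
      derivWithin_of_mem_nhds (Icc_mem_nhds hx.1 hx.2)
    have h3 : iteratedDerivWithin 1 e I =ᶠ[nhds x] deriv e := by
      filter_upwards [isOpen_Ioo.mem_nhds hx] with y hy
      rw [iteratedDerivWithin_one]
      exact derivWithin_of_mem_nhds (Icc_mem_nhds hy.1 hy.2)
    rw [h1, h2, h3.deriv_eq]
  have hecont : ContinuousOn e I := hC2.continuousOn
  have hf1cont : ContinuousOn f1 I := hC2.continuousOn_derivWithin hUD (by norm_num)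
  have hf2cont : ContinuousOn f2 I := hC2.continuousOn_iteratedDerivWithin (by norm_num) hUD
  have hit : ∀ m : ℕ, deriv^[m + 1] e = deriv (deriv^[m] e) := fun m =>
    Function.iterate_succ_apply' deriv m e
  -- per-interval derivative facts
  have hsubIcc : ∀ j, 1 ≤ j → j ≤ n → Set.Icc (t (j - 1)) (t j) ⊆ I := by
    intro j hj1 hjn x hx
    have h1 : t 0 ≤ t (j - 1) := hmono (j - 1) (le_trans (Nat.sub_le j 1) hjn) 0 (Nat.zero_le _)
    have h2 : t j ≤ t n := hmono n le_rfl j hjn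
    exact ⟨le_trans h1 hx.1, le_trans hx.2 h2⟩
  have hsubIoo : ∀ j, 1 ≤ j → j ≤ n → Set.Ioo (t (j - 1)) (t j) ⊆ Set.Ioo (t 0) (t n) := by
    intro j hj1 hjn x hx
    have h1 : t 0 ≤ t (j - 1) := hmono (j - 1) (le_trans (Nat.sub_le j 1) hjn) 0 (Nat.zero_le _)
    have h2 : t j ≤ t n := hmono n le_rfl j hjn
    exact ⟨lt_of_le_of_lt h1 hx.1, lt_of_lt_of_le hx.2 h2⟩
  have hderivs : ∀ j, 1 ≤ j → j ≤ n → ∀ x ∈ Set.Ioo (t (j - 1)) (t j),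
      HasDerivAt e (f1 x) x ∧ HasDerivAt f1 (f2 x) x ∧
      HasDerivAt f2 (deriv^[3] e x) x ∧ HasDerivAt (deriv^[3] e) (deriv^[4] e x) x := by
    intro j hj1 hjn x hx
    have hx' : x ∈ Set.Ioo (t 0) (t n) := hsubIoo j hj1 hjn hx
    have hd := hdiff4 j hj1 hjn x hx
    have heq1 : f1 =ᶠ[nhds x] deriv e := by
      filter_upwards [isOpen_Ioo.mem_nhds hx'] with y hy
      exact hf1open y hy
    have heq2 : f2 =ᶠ[nhds x] deriv^[2] e := by
      filter_upwards [isOpen_Ioo.mem_nhds hx'] with y hy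
      rw [hf2open y hy, hit 1, Function.iterate_one]
    refine ⟨?_, ?_, ?_, ?_⟩
    · rw [hf1open x hx']
      have h0 : DifferentiableAt ℝ e x := by simpa using hd.1 0 (by norm_num)
      exact h0.hasDerivAt
    · have h1 : DifferentiableAt ℝ (deriv e) x := by
        have := hd.1 1 (by norm_num); rwa [Function.iterate_one] at this
      have h2 : HasDerivAt (deriv e) (deriv (deriv e) x) x := h1.hasDerivAt
      rw [show f2 x = deriv (deriv e) x from hf2open x hx']
      exact heq1.hasDerivAt_iff.mpr h2
    · have h1 : DifferentiableAt ℝ (deriv^[2] e) x := hd.1 2 (by norm_num)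
      have h2 : HasDerivAt (deriv^[2] e) (deriv^[3] e x) x := by
        rw [hit 2]
        exact h1.hasDerivAt
      exact heq2.hasDerivAt_iff.mpr h2
    · have h1 : DifferentiableAt ℝ (deriv^[3] e) x := hd.1 3 (by norm_num)
      have h2 : HasDerivAt (deriv^[3] e) (deriv^[4] e x) x := by
        rw [hit 3]
        exact h1.hasDerivAt
      exact h2
  -- interval relations
  have hA : ∀ j, 1 ≤ j → j ≤ n →
      |2 * f1 (t (j - 1)) + f1 (t j) + ((t j - t (j - 1)) / 2) * f2 (t (j - 1))|
        ≤ K * (t j - t (j - 1)) ^ 3 / 24 := by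
    intro j hj1 hjn
    have hder := hderivs j hj1 hjn
    have h0 := rel_left (ht j hj1 hjn) hK
      (hecont.mono (hsubIcc j hj1 hjn)) (hf1cont.mono (hsubIcc j hj1 hjn))
      (hf2cont.mono (hsubIcc j hj1 hjn))
      (fun x hx => (hder x hx).1) (fun x hx => (hder x hx).2.1)
      (fun x hx => (hder x hx).2.2.1) (fun x hx => (hder x hx).2.2.2)
      (fun x hx => (hdiff4 j hj1 hjn x hx).2)
    rw [hknots j hjn, hknots (j - 1) (le_trans (Nat.sub_le j 1) hjn)] at h0
    have heq : 2 * f1 (t (j - 1)) + f1 (t j) - 3 * ((0:ℝ) - 0) / (t j - t (j - 1))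
        + ((t j - t (j - 1)) / 2) * f2 (t (j - 1))
        = 2 * f1 (t (j - 1)) + f1 (t j) + ((t j - t (j - 1)) / 2) * f2 (t (j - 1)) := by
      ring
    rwa [heq] at h0
  have hB : ∀ j, 1 ≤ j → j ≤ n →
      |f1 (t (j - 1)) + 2 * f1 (t j) - ((t j - t (j - 1)) / 2) * f2 (t j)|
        ≤ K * (t j - t (j - 1)) ^ 3 / 24 := by
    intro j hj1 hjn
    have hder := hderivs j hj1 hjn
    have h0 := rel_right (ht j hj1 hjn) hK
      (hecont.mono (hsubIcc j hj1 hjn)) (hf1cont.mono (hsubIcc j hj1 hjn))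
      (hf2cont.mono (hsubIcc j hj1 hjn))
      (fun x hx => (hder x hx).1) (fun x hx => (hder x hx).2.1)
      (fun x hx => (hder x hx).2.2.1) (fun x hx => (hder x hx).2.2.2)
      (fun x hx => (hdiff4 j hj1 hjn x hx).2)
    rw [hknots j hjn, hknots (j - 1) (le_trans (Nat.sub_le j 1) hjn)] at h0
    have heq : f1 (t (j - 1)) + 2 * f1 (t j) - 3 * ((0:ℝ) - 0) / (t j - t (j - 1))
        - ((t j - t (j - 1)) / 2) * f2 (t j)
        = f1 (t (j - 1)) + 2 * f1 (t j) - ((t j - t (j - 1)) / 2) * f2 (t j) := by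
      ring
    rwa [heq] at h0
  -- step sizes
  have hstep : ∀ j, 1 ≤ j → j ≤ n → 0 < t j - t (j - 1) ∧ t j - t (j - 1) ≤ τ := by
    intro j hj1 hjn
    exact ⟨by linarith [ht j hj1 hjn], hτ j hj1 hjn⟩
  have hτpos : 0 < τ := lt_of_lt_of_le (hstep 1 le_rfl hn).1 (hstep 1 le_rfl hn).2
  have hcube : ∀ j, 1 ≤ j → j ≤ n → K * (t j - t (j - 1)) ^ 3 / 24 ≤ K * τ ^ 3 / 24 := by
    intro j hj1 hjn
    have h1 := (hstep j hj1 hjn).1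
    have h2 := (hstep j hj1 hjn).2
    have : (t j - t (j - 1)) ^ 3 ≤ τ ^ 3 := pow_le_pow_left₀ h1.le h2 3
    have := mul_le_mul_of_nonneg_left this hK
    linarith
  -- maximum principle
  obtain ⟨j0, hj0mem, hj0max⟩ := Finset.exists_max_image (Finset.range (n + 1))
    (fun j => |f1 (t j)|) ⟨0, by simp⟩
  have hj0n : j0 ≤ n := Nat.lt_succ_iff.mp (Finset.mem_range.mp hj0mem)
  have hmax : ∀ i, i ≤ n → |f1 (t i)| ≤ |f1 (t j0)| := fun i hi =>
    hj0max i (Finset.mem_range.mpr (Nat.lt_succ_iff.mpr hi))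
  have hmain : |f1 (t j0)| ≤ K * τ ^ 3 / 24 := by
    rcases Nat.eq_zero_or_pos j0 with hj00 | hj0pos
    · -- boundary case j0 = 0
      have h1 := hA 1 le_rfl hn
      have h10 : (1 : ℕ) - 1 = 0 := rfl
      rw [h10] at h1
      rw [show f2 (t 0) = 0 from hbda] at h1
      have h2 : |2 * f1 (t 0) + f1 (t 1) + (t 1 - t 0) / 2 * 0| =
          |2 * f1 (t 0) + f1 (t 1)| := by ring_nf
      rw [h2] at h1
      have h3 : |2 * f1 (t 0)| ≤ |2 * f1 (t 0) + f1 (t 1)| + |f1 (t 1)| := by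
        calc |2 * f1 (t 0)| = |(2 * f1 (t 0) + f1 (t 1)) + (-(f1 (t 1)))| := by ring_nf
          _ ≤ |2 * f1 (t 0) + f1 (t 1)| + |(-(f1 (t 1)))| := abs_add_le _ _
          _ = |2 * f1 (t 0) + f1 (t 1)| + |f1 (t 1)| := by rw [abs_neg]
      have h4 : |2 * f1 (t 0)| = 2 * |f1 (t 0)| := by
        rw [abs_mul]; norm_num
      have h5 : |f1 (t 1)| ≤ |f1 (t j0)| := hmax 1 hn
      rw [hj00]
      rw [hj00] at h5
      have h6 := hcube 1 le_rfl hn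
      rw [h10] at h6
      linarith [h3, h1, h4, h5, h6]
    rcases Nat.eq_or_lt_of_le hj0n with hj0n' | hj0lt
    · -- boundary case j0 = n
      have h1 := hB n hn le_rfl
      rw [show f2 (t n) = 0 from hbdb] at h1
      have h2 : |f1 (t (n - 1)) + 2 * f1 (t n) - (t n - t (n - 1)) / 2 * 0| =
          |f1 (t (n - 1)) + 2 * f1 (t n)| := by ring_nf
      rw [h2] at h1
      have h3 : |2 * f1 (t n)| ≤ |f1 (t (n - 1)) + 2 * f1 (t n)| + |f1 (t (n - 1))| := by
        calc |2 * f1 (t n)| = |(f1 (t (n - 1)) + 2 * f1 (t n)) + (-(f1 (t (n - 1))))| := by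
              ring_nf
          _ ≤ _ := abs_add_le _ _
          _ = |f1 (t (n - 1)) + 2 * f1 (t n)| + |f1 (t (n - 1))| := by rw [abs_neg]
      have h4 : |2 * f1 (t n)| = 2 * |f1 (t n)| := by rw [abs_mul]; norm_num
      have h5 : |f1 (t (n - 1))| ≤ |f1 (t j0)| := hmax (n - 1) (Nat.sub_le n 1)
      rw [hj0n']
      rw [hj0n'] at h5
      have h6 := hcube n hn le_rfl
      linarith [h3, h1, h4, h5, h6]
    · -- interior case
      set h : ℝ := t j0 - t (j0 - 1) with hdef
      set h' : ℝ := t (j0 + 1) - t j0 with h'def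
      have hj01 : 1 ≤ j0 := hj0pos
      have hj1n : j0 + 1 ≤ n := hj0lt
      have hs1 := hstep j0 hj01 (le_of_lt hj0lt)
      have hs2 := hstep (j0 + 1) (Nat.le_add_left 1 j0) hj1n
      have hcancel : (j0 + 1) - 1 = j0 := by omega
      rw [hcancel] at hs2
      have hpos : 0 < h := hs1.1
      have h'pos : 0 < h' := hs2.1
      have hle : h ≤ τ := hs1.2
      have h'le : h' ≤ τ := hs2.2
      have hBj := hB j0 hj01 (le_of_lt hj0lt)
      have hAj := hA (j0 + 1) (Nat.le_add_left 1 j0) hj1n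
      rw [hcancel] at hAj
      set X := |f1 (t j0)| with hXdef
      set D0 := f1 (t (j0 - 1)) with hD0def
      set D1 := f1 (t j0) with hD1def
      set D2 := f1 (t (j0 + 1)) with hD2def
      set Mj := f2 (t j0) with hMjdef
      -- combined estimate
      have hcomb : |(1 / h) * (D0 + 2 * D1 - (h / 2) * Mj)
          + (1 / h') * (2 * D1 + D2 + (h' / 2) * Mj)|
          ≤ (1 / h) * (K * h ^ 3 / 24) + (1 / h') * (K * h' ^ 3 / 24) := by
        calc |(1 / h) * (D0 + 2 * D1 - (h / 2) * Mj)
            + (1 / h') * (2 * D1 + D2 + (h' / 2) * Mj)|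
            ≤ |(1 / h) * (D0 + 2 * D1 - (h / 2) * Mj)|
              + |(1 / h') * (2 * D1 + D2 + (h' / 2) * Mj)| := abs_add_le _ _
          _ = (1 / h) * |D0 + 2 * D1 - (h / 2) * Mj|
              + (1 / h') * |2 * D1 + D2 + (h' / 2) * Mj| := by
              rw [abs_mul, abs_mul, abs_of_pos (by positivity : (0:ℝ) < 1 / h),
                abs_of_pos (by positivity : (0:ℝ) < 1 / h')]
          _ ≤ (1 / h) * (K * h ^ 3 / 24) + (1 / h') * (K * h' ^ 3 / 24) := by
              have u1 : |D0 + 2 * D1 - (h / 2) * Mj| ≤ K * h ^ 3 / 24 := by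
                have := hBj
                have heq : f1 (t (j0 - 1)) + 2 * f1 (t j0)
                    - (t j0 - t (j0 - 1)) / 2 * f2 (t j0)
                    = D0 + 2 * D1 - (h / 2) * Mj := by
                  rw [hD0def, hD1def, hMjdef, hdef]
                rwa [heq] at this
              have u2 : |2 * D1 + D2 + (h' / 2) * Mj| ≤ K * h' ^ 3 / 24 := by
                have := hAj
                have heq : 2 * f1 (t j0) + f1 (t (j0 + 1))
                    + (t (j0 + 1) - t j0) / 2 * f2 (t j0)
                    = 2 * D1 + D2 + (h' / 2) * Mj := by
                  rw [hD1def, hD2def, hMjdef, h'def]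
                rwa [heq] at this
              have v1 : (0:ℝ) ≤ 1 / h := by positivity
              have v2 : (0:ℝ) ≤ 1 / h' := by positivity
              exact add_le_add (mul_le_mul_of_nonneg_left u1 v1)
                (mul_le_mul_of_nonneg_left u2 v2)
      have hinner : (1 / h) * (D0 + 2 * D1 - (h / 2) * Mj)
          + (1 / h') * (2 * D1 + D2 + (h' / 2) * Mj)
          = (1 / h) * D0 + (2 / h + 2 / h') * D1 + (1 / h') * D2 := by
        field_simp
        ring
      rw [hinner] at hcomb
      -- triangle inequality to isolate D1
      have htri : (2 / h + 2 / h') * X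
          ≤ |(1 / h) * D0 + (2 / h + 2 / h') * D1 + (1 / h') * D2|
            + (1 / h) * |D0| + (1 / h') * |D2| := by
        have w1 : |(2 / h + 2 / h') * D1|
            ≤ |(1 / h) * D0 + (2 / h + 2 / h') * D1 + (1 / h') * D2|
              + |(1 / h) * D0| + |(1 / h') * D2| := by
          calc |(2 / h + 2 / h') * D1|
              = |((1 / h) * D0 + (2 / h + 2 / h') * D1 + (1 / h') * D2)
                + (-((1 / h) * D0)) + (-((1 / h') * D2))| := by ring_nf
            _ ≤ |((1 / h) * D0 + (2 / h + 2 / h') * D1 + (1 / h') * D2)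
                + (-((1 / h) * D0))| + |(-((1 / h') * D2))| := abs_add_le _ _
            _ ≤ |(1 / h) * D0 + (2 / h + 2 / h') * D1 + (1 / h') * D2|
                + |(-((1 / h) * D0))| + |(-((1 / h') * D2))| := by
                  have := abs_add_le ((1 / h) * D0 + (2 / h + 2 / h') * D1 + (1 / h') * D2)
                    (-((1 / h) * D0))
                  linarith
            _ = _ := by rw [abs_neg, abs_neg]
        have w2 : |(2 / h + 2 / h') * D1| = (2 / h + 2 / h') * X := by
          rw [abs_mul, abs_of_pos (by positivity : (0:ℝ) < 2 / h + 2 / h')]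
        have w3 : |(1 / h) * D0| = (1 / h) * |D0| := by
          rw [abs_mul, abs_of_pos (by positivity : (0:ℝ) < 1 / h)]
        have w4 : |(1 / h') * D2| = (1 / h') * |D2| := by
          rw [abs_mul, abs_of_pos (by positivity : (0:ℝ) < 1 / h')]
        rw [w2, w3, w4] at w1
        exact w1
      have hD0le : |D0| ≤ X := hmax (j0 - 1) (le_trans (Nat.sub_le j0 1) hj0n)
      have hD2le : |D2| ≤ X := hmax (j0 + 1) hj1n
      have hXnn : 0 ≤ X := abs_nonneg _
      have hfin1 : (1 / h + 1 / h') * X ≤ K * (h ^ 2 + h' ^ 2) / 24 := by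
        have w5 : (1 / h) * |D0| ≤ (1 / h) * X :=
          mul_le_mul_of_nonneg_left hD0le (by positivity)
        have w6 : (1 / h') * |D2| ≤ (1 / h') * X :=
          mul_le_mul_of_nonneg_left hD2le (by positivity)
        have w7 : (1 / h) * (K * h ^ 3 / 24) + (1 / h') * (K * h' ^ 3 / 24)
            = K * (h ^ 2 + h' ^ 2) / 24 := by
          field_simp
        have e3 : (2 / h + 2 / h') * X - (1 / h) * X - (1 / h') * X
            = (1 / h + 1 / h') * X := by ring
        linarith [htri, hcomb, w5, w6, w7, e3]
      -- clear denominators and conclude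
      have hfin2 : 24 * ((h + h') * X) ≤ K * (h ^ 2 + h' ^ 2) * (h * h') := by
        have hq := mul_le_mul_of_nonneg_right hfin1
          (show (0:ℝ) ≤ 24 * (h * h') by positivity)
        have e1 : (1 / h + 1 / h') * X * (24 * (h * h')) = 24 * ((h + h') * X) := by
          field_simp
          ring
        have e2 : K * (h ^ 2 + h' ^ 2) / 24 * (24 * (h * h'))
            = K * (h ^ 2 + h' ^ 2) * (h * h') := by
          field_simp
        rw [e1, e2] at hq
        exact hq
      have hfin3 : K * (h ^ 2 + h' ^ 2) * (h * h') ≤ (h + h') * (K * τ ^ 3) := by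
        have q1 : h ^ 2 ≤ h * τ := by nlinarith
        have q2 : h' ^ 2 ≤ h' * τ := by nlinarith
        have q3 : h * h' ≤ τ * τ := mul_le_mul hle h'le h'pos.le hτpos.le
        have r0 : h ^ 2 + h' ^ 2 ≤ (h + h') * τ := by nlinarith
        have r1 : K * (h ^ 2 + h' ^ 2) * (h * h') ≤ K * ((h + h') * τ) * (h * h') :=
          mul_le_mul_of_nonneg_right (mul_le_mul_of_nonneg_left r0 hK)
            (mul_nonneg hpos.le h'pos.le)
        have r2 : K * ((h + h') * τ) * (h * h') ≤ K * ((h + h') * τ) * (τ * τ) :=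
          mul_le_mul_of_nonneg_left q3
            (mul_nonneg hK (mul_nonneg (by linarith) hτpos.le))
        have r3 : K * ((h + h') * τ) * (τ * τ) = (h + h') * (K * τ ^ 3) := by ring
        linarith
      have hfin4 : 24 * ((h + h') * X) ≤ (h + h') * (K * τ ^ 3) := le_trans hfin2 hfin3
      have hhh : 0 < h + h' := by linarith
      have u : (h + h') * (24 * X) ≤ (h + h') * (K * τ ^ 3) := by linarith [hfin4]
      have u2 : 24 * X ≤ K * τ ^ 3 := le_of_mul_le_mul_left u hhh
      linarith
  intro k hk
  have h1 : |f1 (t k)| ≤ |f1 (t j0)| := hmax k hk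
  have h2 : K * τ ^ 3 / 24 = 1 / 24 * K * τ ^ 3 := by ring
  calc |f1 (t k)| ≤ |f1 (t j0)| := h1
    _ ≤ K * τ ^ 3 / 24 := hmain
    _ = 1 / 24 * K * τ ^ 3 := h2
end

section
/- Let a = t_0 < t_1 < … < t_n = b be a partition of [a, b] with maximum spacing τ = max_k (t_k − t_{k−1}), and let K ≥ 0. Let e : [a, b] → ℝ be twice continuously differentiable on [a, b], and suppose that on each open subinterval (t_{k−1}, t_k) the function e is four times differentiable with |e⁗(t)| ≤ K for all t in each open subinterval. Assume e(t_k) = 0 for all 0 ≤ k ≤ n, and e''(a) = e''(b) = 0. Then |e''(t_k)| ≤ (1/4)·K·τ² for every 0 ≤ k ≤ n. -/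
open Set intervalIntegral

/-- Linear interpolation error bound: if `g` has two derivatives on `Ioo c d` with the
second bounded by `K`, then `g` deviates from its linear interpolant at `c, d` by at
most `K/2 * (s-c)*(d-s)`. -/
lemma interp_bound (g g1 g2 : ℝ → ℝ) (K c d : ℝ) (hcd : c < d)
    (hgc : ContinuousOn g (Icc c d))
    (hg1 : ∀ x ∈ Ioo c d, HasDerivAt g (g1 x) x)
    (hg2 : ∀ x ∈ Ioo c d, HasDerivAt g1 (g2 x) x)
    (hKb : ∀ x ∈ Ioo c d, |g2 x| ≤ K) :
    ∀ s ∈ Icc c d,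
      |g s - (g c * ((d - s) / (d - c)) + g d * ((s - c) / (d - c)))|
        ≤ K / 2 * ((s - c) * (d - s)) := by
  intro s hs
  have hdc : d - c ≠ 0 := by linarith [hcd]
  rcases eq_or_lt_of_le hs.1 with h1 | h1
  · rw [← h1]
    rw [div_self hdc]
    simp
  rcases eq_or_lt_of_le hs.2 with h2 | h2
  · rw [h2]
    rw [div_self hdc]
    simp
  -- interior case
  set L : ℝ → ℝ := fun x => g c * ((d - x) / (d - c)) + g d * ((x - c) / (d - c)) with hL
  set lam : ℝ := (g s - L s) / ((s - c) * (s - d)) with hlam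
  have hsc : s - c ≠ 0 := by linarith [h1]
  have hsd : s - d ≠ 0 := by linarith [h2]
  set φ : ℝ → ℝ := fun x => g x - L x - lam * ((x - c) * (x - d)) with hφ
  have hφc : φ c = 0 := by simp only [hφ, hL]; field_simp; ring
  have hφd : φ d = 0 := by simp only [hφ, hL]; field_simp; ring
  have hφs : φ s = 0 := by
    simp only [hφ, hlam]
    field_simp
    ring
  have hLcont : Continuous L := by fun_prop
  have hφcont : ContinuousOn φ (Icc c d) := by
    apply (hgc.sub hLcont.continuousOn).sub (by fun_prop)
  -- Rolle on [c,s] and [s,d]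
  obtain ⟨p, hp, hp0⟩ := exists_deriv_eq_zero h1 (hφcont.mono (Icc_subset_Icc le_rfl hs.2))
    (by rw [hφc, hφs])
  obtain ⟨q, hq, hq0⟩ := exists_deriv_eq_zero h2 (hφcont.mono (Icc_subset_Icc hs.1 le_rfl))
    (by rw [hφs, hφd])
  have hpcd : p ∈ Ioo c d := ⟨hp.1, lt_trans hp.2 h2⟩
  have hqcd : q ∈ Ioo c d := ⟨lt_trans h1 hq.1, hq.2⟩
  -- derivative of φ on the interior
  set Φ : ℝ → ℝ := fun x => g1 x - (g d - g c) / (d - c) - lam * (2 * x - c - d) with hΦ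
  have hdφ : ∀ x ∈ Ioo c d, HasDerivAt φ (Φ x) x := by
    intro x hx
    have h1' := hg1 x hx
    have hLd : HasDerivAt L ((g d - g c) / (d - c)) x := by
      have : HasDerivAt (fun y : ℝ => g c * ((d - y) / (d - c)) + g d * ((y - c) / (d - c)))
          (g c * (-1 / (d - c)) + g d * (1 / (d - c))) x := by
        apply HasDerivAt.add
        · exact (((hasDerivAt_id x).neg.const_add d).div_const (d - c)).const_mul (g c)
        · exact (((hasDerivAt_id x).sub_const c).div_const (d - c)).const_mul (g d)
      convert this using 1
      field_simp; ring
    have hQd : HasDerivAt (fun x : ℝ => lam * ((x - c) * (x - d))) (lam * (2 * x - c - d)) x := by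
      have : HasDerivAt (fun x : ℝ => (x - c) * (x - d)) (1 * (x - d) + (x - c) * 1) x :=
        ((hasDerivAt_id x).sub_const c).mul ((hasDerivAt_id x).sub_const d)
      have := this.const_mul lam
      exact this.congr_deriv (by ring)
    exact (h1'.sub hLd).sub hQd
  have hΦp : Φ p = 0 := by rw [← (hdφ p hpcd).deriv]; exact hp0
  have hΦq : Φ q = 0 := by rw [← (hdφ q hqcd).deriv]; exact hq0
  have hpq : p < q := lt_trans hp.2 hq.1
  -- Φ is continuous on [p,q] ⊆ Ioo c d
  have hsub : Icc p q ⊆ Ioo c d := fun x hx => ⟨lt_of_lt_of_le hpcd.1 hx.1, lt_of_le_of_lt hx.2 hqcd.2⟩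
  have hΦcont : ContinuousOn Φ (Icc p q) := by
    intro x hx
    have hx' := hsub hx
    exact (((hg2 x hx').differentiableAt.continuousAt.sub continuousAt_const).sub
      (by fun_prop)).continuousWithinAt
  obtain ⟨r, hr, hr0⟩ := exists_deriv_eq_zero hpq hΦcont (by rw [hΦp, hΦq])
  have hrcd : r ∈ Ioo c d := hsub ⟨le_of_lt hr.1, le_of_lt hr.2⟩
  have hdΦ : HasDerivAt Φ (g2 r - 2 * lam) r := by
    have h2' := hg2 r hrcd
    have : HasDerivAt (fun x : ℝ => lam * (2 * x - c - d)) (lam * 2) r := by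
      have : HasDerivAt (fun x : ℝ => 2 * x - c - d) 2 r := by
        simpa using (((hasDerivAt_id r).const_mul 2).sub_const c).sub_const d
      simpa using this.const_mul lam
    have := (h2'.sub_const ((g d - g c) / (d - c))).sub this
    exact this.congr_deriv (by ring)
  have hlam2 : g2 r = 2 * lam := by
    have := hdΦ.deriv
    rw [hr0] at this
    linarith [this]
  have hlambd : |lam| ≤ K / 2 := by
    have := hKb r hrcd
    rw [hlam2] at this
    rw [abs_mul] at this
    simp at this
    linarith [abs_nonneg lam]
  -- conclude
  have key : g s - L s = lam * ((s - c) * (s - d)) := by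
    rw [hlam]; field_simp
  rw [show g s - (g c * ((d - s) / (d - c)) + g d * ((s - c) / (d - c))) = g s - L s from rfl, key]
  rw [abs_mul]
  have h3 : |(s - c) * (s - d)| = (s - c) * (d - s) := by
    rw [abs_mul]
    rw [abs_of_pos (by linarith : (0:ℝ) < s - c), abs_of_neg (by linarith : s - d < 0)]
    ring
  rw [h3]
  apply mul_le_mul_of_nonneg_right hlambd
  nlinarith [h1, h2]

/-- FTC identity: `∫ (s-c) g2 = (d-c) g1 d - (g d - g c)` when `g1 = g'`, `g2 = g1'`. -/
lemma ftc_left (g g1 g2 : ℝ → ℝ) (c d : ℝ) (hcd : c < d)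
    (h0c : ContinuousOn g (Icc c d)) (h1c : ContinuousOn g1 (Icc c d))
    (h2c : ContinuousOn g2 (Icc c d))
    (hg1 : ∀ x ∈ Ioo c d, HasDerivAt g (g1 x) x)
    (hg2 : ∀ x ∈ Ioo c d, HasDerivAt g1 (g2 x) x) :
    ∫ s in c..d, (s - c) * g2 s = (d - c) * g1 d - (g d - g c) := by
  have key := integral_eq_sub_of_hasDerivAt_of_le (f := fun s => (s - c) * g1 s - g s)
    (f' := fun s => (s - c) * g2 s) hcd.le
    (((continuousOn_id.sub continuousOn_const).mul h1c).sub h0c)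
    (fun x hx => by
      have : HasDerivAt (fun s => (s - c) * g1 s - g s)
          (1 * g1 x + (x - c) * g2 x - g1 x) x :=
        (((hasDerivAt_id x).sub_const c).mul (hg2 x hx)).sub (hg1 x hx)
      exact this.congr_deriv (by ring))
    (by
      apply ContinuousOn.intervalIntegrable
      rw [uIcc_of_le hcd.le]
      exact (continuousOn_id.sub continuousOn_const).mul h2c)
  rw [key]; ring

lemma ftc_right (g g1 g2 : ℝ → ℝ) (c d : ℝ) (hcd : c < d)
    (h0c : ContinuousOn g (Icc c d)) (h1c : ContinuousOn g1 (Icc c d))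
    (h2c : ContinuousOn g2 (Icc c d))
    (hg1 : ∀ x ∈ Ioo c d, HasDerivAt g (g1 x) x)
    (hg2 : ∀ x ∈ Ioo c d, HasDerivAt g1 (g2 x) x) :
    ∫ s in c..d, (d - s) * g2 s = -((d - c) * g1 c) + (g d - g c) := by
  have key := integral_eq_sub_of_hasDerivAt_of_le (f := fun s => g s - (s - d) * g1 s)
    (f' := fun s => (d - s) * g2 s) hcd.le
    (h0c.sub ((continuousOn_id.sub continuousOn_const).mul h1c))
    (fun x hx => by
      have : HasDerivAt (fun s => g s - (s - d) * g1 s)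
          (g1 x - (1 * g1 x + (x - d) * g2 x)) x :=
        (hg1 x hx).sub (((hasDerivAt_id x).sub_const d).mul (hg2 x hx))
      exact this.congr_deriv (by ring))
    (by
      apply ContinuousOn.intervalIntegrable
      rw [uIcc_of_le hcd.le]
      exact (continuousOn_const.sub continuousOn_id).mul h2c)
  rw [key]; ring

/-- `∫ (s-c) * ((m₀(d-s) + m₁(s-c))/(d-c)) = (d-c)² (m₀/6 + m₁/3)`. -/
lemma int_lin_left (c d m₀ m₁ : ℝ) (hcd : c < d) :
    ∫ s in c..d, (s - c) * ((m₀ * (d - s) + m₁ * (s - c)) / (d - c))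
      = (d - c) ^ 2 * (m₀ / 6 + m₁ / 3) := by
  have hdc : d - c ≠ 0 := by linarith
  have key := integral_eq_sub_of_hasDerivAt (a := c) (b := d)
    (f := fun s => (m₀ * ((d - c) * (s - c) ^ 2 / 2 - (s - c) ^ 3 / 3)
        + m₁ * (s - c) ^ 3 / 3) / (d - c))
    (f' := fun s => (s - c) * ((m₀ * (d - s) + m₁ * (s - c)) / (d - c)))
    (fun x _ => by
      have hb : HasDerivAt (fun s : ℝ => s - c) 1 x := (hasDerivAt_id x).sub_const c
      have h2 : HasDerivAt (fun s : ℝ => (s - c) ^ 2) (2 * (x - c)) x := by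
        exact (hb.pow 2).congr_deriv (by norm_num)
      have h3 : HasDerivAt (fun s : ℝ => (s - c) ^ 3) (3 * (x - c) ^ 2) x := by
        exact (hb.pow 3).congr_deriv (by norm_num)
      have hp := ((((h2.const_mul (d - c)).div_const 2).sub (h3.div_const 3)).const_mul m₀
        |>.add ((h3.const_mul m₁).div_const 3)).div_const (d - c)
      exact hp.congr_deriv (by field_simp; ring))
    (by apply ContinuousOn.intervalIntegrable; fun_prop)
  rw [key]
  field_simp; ring

lemma int_lin_right (c d m₀ m₁ : ℝ) (hcd : c < d) :
    ∫ s in c..d, (d - s) * ((m₀ * (d - s) + m₁ * (s - c)) / (d - c))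
      = (d - c) ^ 2 * (m₀ / 3 + m₁ / 6) := by
  have hdc : d - c ≠ 0 := by linarith
  have key := integral_eq_sub_of_hasDerivAt (a := c) (b := d)
    (f := fun s => (m₁ * ((d - c) * (s - c) ^ 2 / 2 - (s - c) ^ 3 / 3)
        + m₀ * ((d - c) ^ 2 * (s - c) - (d - c) * (s - c) ^ 2 + (s - c) ^ 3 / 3)) / (d - c))
    (f' := fun s => (d - s) * ((m₀ * (d - s) + m₁ * (s - c)) / (d - c)))
    (fun x _ => by
      have hb : HasDerivAt (fun s : ℝ => s - c) 1 x := (hasDerivAt_id x).sub_const c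
      have h1 : HasDerivAt (fun s : ℝ => (s - c)) 1 x := hb
      have h2 : HasDerivAt (fun s : ℝ => (s - c) ^ 2) (2 * (x - c)) x := by
        exact (hb.pow 2).congr_deriv (by norm_num)
      have h3 : HasDerivAt (fun s : ℝ => (s - c) ^ 3) (3 * (x - c) ^ 2) x := by
        exact (hb.pow 3).congr_deriv (by norm_num)
      have hp := ((((h2.const_mul (d - c)).div_const 2).sub (h3.div_const 3)).const_mul m₁
        |>.add (((h1.const_mul ((d - c) ^ 2)).sub (h2.const_mul (d - c))).add
          (h3.div_const 3) |>.const_mul m₀)).div_const (d - c)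
      exact hp.congr_deriv (by field_simp; ring))
    (by apply ContinuousOn.intervalIntegrable; fun_prop)
  rw [key]
  field_simp; ring

/-- `∫ (s-c) * ((s-c)*(d-s)) = (d-c)⁴/12` and the mirrored version. -/
lemma int_err_left (c d : ℝ) :
    ∫ s in c..d, (s - c) * ((s - c) * (d - s)) = (d - c) ^ 4 / 12 := by
  have key := integral_eq_sub_of_hasDerivAt (a := c) (b := d)
    (f := fun s => (d - c) * (s - c) ^ 3 / 3 - (s - c) ^ 4 / 4)
    (f' := fun s => (s - c) * ((s - c) * (d - s)))
    (fun x _ => by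
      have hb : HasDerivAt (fun s : ℝ => s - c) 1 x := (hasDerivAt_id x).sub_const c
      have h3 : HasDerivAt (fun s : ℝ => (s - c) ^ 3) (3 * (x - c) ^ 2) x := by
        exact (hb.pow 3).congr_deriv (by norm_num)
      have h4 : HasDerivAt (fun s : ℝ => (s - c) ^ 4) (4 * (x - c) ^ 3) x := by
        exact (hb.pow 4).congr_deriv (by norm_num)
      have hp := ((h3.const_mul (d - c)).div_const 3).sub (h4.div_const 4)
      exact hp.congr_deriv (by ring))
    (by apply ContinuousOn.intervalIntegrable; fun_prop)
  rw [key]; ring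

lemma int_err_right (c d : ℝ) :
    ∫ s in c..d, (d - s) * ((s - c) * (d - s)) = (d - c) ^ 4 / 12 := by
  have key := integral_eq_sub_of_hasDerivAt (a := c) (b := d)
    (f := fun s => (d - c) ^ 2 * (s - c) ^ 2 / 2 - 2 * (d - c) * (s - c) ^ 3 / 3 + (s - c) ^ 4 / 4)
    (f' := fun s => (d - s) * ((s - c) * (d - s)))
    (fun x _ => by
      have hb : HasDerivAt (fun s : ℝ => s - c) 1 x := (hasDerivAt_id x).sub_const c
      have h2 : HasDerivAt (fun s : ℝ => (s - c) ^ 2) (2 * (x - c)) x := by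
        exact (hb.pow 2).congr_deriv (by norm_num)
      have h3 : HasDerivAt (fun s : ℝ => (s - c) ^ 3) (3 * (x - c) ^ 2) x := by
        exact (hb.pow 3).congr_deriv (by norm_num)
      have h4 : HasDerivAt (fun s : ℝ => (s - c) ^ 4) (4 * (x - c) ^ 3) x := by
        exact (hb.pow 4).congr_deriv (by norm_num)
      have hp := (((h2.const_mul ((d - c) ^ 2)).div_const 2).sub
        ((h3.const_mul (2 * (d - c))).div_const 3)).add (h4.div_const 4)
      exact hp.congr_deriv (by ring))
    (by apply ContinuousOn.intervalIntegrable; fun_prop)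
  rw [key]; ring

/-- The key one-subinterval estimate: if `e` vanishes at `c` and `d`, has derivative `E1`,
second derivative `G`, etc., then `E1` at the endpoints is close to the Lidstone prediction. -/
lemma subinterval_est (e E1 G g3 g4 : ℝ → ℝ) (c d K : ℝ) (hcd : c < d) (hK : 0 ≤ K)
    (hec : e c = 0) (hed : e d = 0)
    (h0c : ContinuousOn e (Icc c d)) (h1c : ContinuousOn E1 (Icc c d))
    (h2c : ContinuousOn G (Icc c d))
    (hd1 : ∀ x ∈ Ioo c d, HasDerivAt e (E1 x) x)
    (hd2 : ∀ x ∈ Ioo c d, HasDerivAt E1 (G x) x)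
    (hd3 : ∀ x ∈ Ioo c d, HasDerivAt G (g3 x) x)
    (hd4 : ∀ x ∈ Ioo c d, HasDerivAt g3 (g4 x) x)
    (hg4 : ∀ x ∈ Ioo c d, |g4 x| ≤ K) :
    |E1 d - ((d - c) * G c / 6 + (d - c) * G d / 3)| ≤ K * (d - c) ^ 3 / 24 ∧
    |E1 c + ((d - c) * G c / 3 + (d - c) * G d / 6)| ≤ K * (d - c) ^ 3 / 24 := by
  have hh : (0:ℝ) < d - c := by linarith
  have hdc : d - c ≠ 0 := ne_of_gt hh
  set L : ℝ → ℝ := fun s => (G c * (d - s) + G d * (s - c)) / (d - c) with hLdef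
  have hinterp : ∀ s ∈ Icc c d, |G s - L s| ≤ K / 2 * ((s - c) * (d - s)) := by
    intro s hs
    have := interp_bound G g3 g4 K c d hcd h2c hd3 hd4 hg4 s hs
    have hEq : G c * ((d - s) / (d - c)) + G d * ((s - c) / (d - c)) = L s := by
      rw [hLdef]; ring
    rwa [hEq] at this
  -- integrability facts
  have hLcont : Continuous L := by
    apply Continuous.div_const
    fun_prop
  have hGI : IntervalIntegrable (fun s => (s - c) * G s) MeasureTheory.volume c d := by
    apply ContinuousOn.intervalIntegrable
    rw [uIcc_of_le hcd.le]
    exact (continuousOn_id.sub continuousOn_const).mul h2c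
  have hGI' : IntervalIntegrable (fun s => (d - s) * G s) MeasureTheory.volume c d := by
    apply ContinuousOn.intervalIntegrable
    rw [uIcc_of_le hcd.le]
    exact (continuousOn_const.sub continuousOn_id).mul h2c
  have hLI : IntervalIntegrable (fun s => (s - c) * L s) MeasureTheory.volume c d := by
    apply Continuous.intervalIntegrable; fun_prop
  have hLI' : IntervalIntegrable (fun s => (d - s) * L s) MeasureTheory.volume c d := by
    apply Continuous.intervalIntegrable; fun_prop
  -- error integral bounds
  have herr_left : |∫ s in c..d, ((s - c) * G s - (s - c) * L s)| ≤ K * (d - c) ^ 4 / 24 := by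
    have hb : ∀ᵐ s ∂(MeasureTheory.volume.restrict (Set.uIoc c d)),
        ‖(s - c) * G s - (s - c) * L s‖ ≤ (s - c) * (K / 2 * ((s - c) * (d - s))) := by
      filter_upwards [MeasureTheory.ae_restrict_mem measurableSet_uIoc] with s hs
      rw [Set.uIoc_of_le hcd.le] at hs
      have hs' : s ∈ Icc c d := ⟨hs.1.le, hs.2⟩
      have h1 := hinterp s hs'
      have hsc : (0:ℝ) ≤ s - c := by linarith [hs.1]
      calc ‖(s - c) * G s - (s - c) * L s‖ = (s - c) * |G s - L s| := by
            rw [Real.norm_eq_abs, ← mul_sub, abs_mul, abs_of_nonneg hsc]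
        _ ≤ (s - c) * (K / 2 * ((s - c) * (d - s))) := by
            exact mul_le_mul_of_nonneg_left h1 hsc
    have hint : IntervalIntegrable (fun s => (s - c) * (K / 2 * ((s - c) * (d - s))))
        MeasureTheory.volume c d := by
      apply Continuous.intervalIntegrable; fun_prop
    have := intervalIntegral.norm_integral_le_abs_of_norm_le hb hint
    rw [Real.norm_eq_abs] at this
    refine le_trans this ?_
    have : ∫ s in c..d, (s - c) * (K / 2 * ((s - c) * (d - s)))
        = K / 2 * ∫ s in c..d, (s - c) * ((s - c) * (d - s)) := by
      rw [← intervalIntegral.integral_const_mul]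
      congr 1; ext s; ring
    rw [this, int_err_left c d]
    rw [abs_of_nonneg (by positivity)]
    have heq : K / 2 * ((d - c) ^ 4 / 12) = K * (d - c) ^ 4 / 24 := by ring
    rw [heq]
  have herr_right : |∫ s in c..d, ((d - s) * G s - (d - s) * L s)| ≤ K * (d - c) ^ 4 / 24 := by
    have hb : ∀ᵐ s ∂(MeasureTheory.volume.restrict (Set.uIoc c d)),
        ‖(d - s) * G s - (d - s) * L s‖ ≤ (d - s) * (K / 2 * ((s - c) * (d - s))) := by
      filter_upwards [MeasureTheory.ae_restrict_mem measurableSet_uIoc] with s hs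
      rw [Set.uIoc_of_le hcd.le] at hs
      have hs' : s ∈ Icc c d := ⟨hs.1.le, hs.2⟩
      have h1 := hinterp s hs'
      have hsd : (0:ℝ) ≤ d - s := by linarith [hs.2]
      calc ‖(d - s) * G s - (d - s) * L s‖ = (d - s) * |G s - L s| := by
            rw [Real.norm_eq_abs, ← mul_sub, abs_mul, abs_of_nonneg hsd]
        _ ≤ (d - s) * (K / 2 * ((s - c) * (d - s))) := by
            exact mul_le_mul_of_nonneg_left h1 hsd
    have hint : IntervalIntegrable (fun s => (d - s) * (K / 2 * ((s - c) * (d - s))))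
        MeasureTheory.volume c d := by
      apply Continuous.intervalIntegrable; fun_prop
    have := intervalIntegral.norm_integral_le_abs_of_norm_le hb hint
    rw [Real.norm_eq_abs] at this
    refine le_trans this ?_
    have : ∫ s in c..d, (d - s) * (K / 2 * ((s - c) * (d - s)))
        = K / 2 * ∫ s in c..d, (d - s) * ((s - c) * (d - s)) := by
      rw [← intervalIntegral.integral_const_mul]
      congr 1; ext s; ring
    rw [this, int_err_right c d]
    rw [abs_of_nonneg (by positivity)]
    have heq : K / 2 * ((d - c) ^ 4 / 12) = K * (d - c) ^ 4 / 24 := by ring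
    rw [heq]
  -- main identities
  have hInt_left : ∫ s in c..d, (s - c) * G s = (d - c) * E1 d := by
    rw [ftc_left e E1 G c d hcd h0c h1c h2c hd1 hd2, hec, hed]; ring
  have hInt_right : ∫ s in c..d, (d - s) * G s = -((d - c) * E1 c) := by
    rw [ftc_right e E1 G c d hcd h0c h1c h2c hd1 hd2, hec, hed]; ring
  have hLint_left : ∫ s in c..d, (s - c) * L s = (d - c) ^ 2 * (G c / 6 + G d / 3) :=
    int_lin_left c d (G c) (G d) hcd
  have hLint_right : ∫ s in c..d, (d - s) * L s = (d - c) ^ 2 * (G c / 3 + G d / 6) :=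
    int_lin_right c d (G c) (G d) hcd
  have hsplit_left : ∫ s in c..d, ((s - c) * G s - (s - c) * L s)
      = (d - c) * E1 d - (d - c) ^ 2 * (G c / 6 + G d / 3) := by
    rw [intervalIntegral.integral_sub hGI hLI, hInt_left, hLint_left]
  have hsplit_right : ∫ s in c..d, ((d - s) * G s - (d - s) * L s)
      = -((d - c) * E1 c) - (d - c) ^ 2 * (G c / 3 + G d / 6) := by
    rw [intervalIntegral.integral_sub hGI' hLI', hInt_right, hLint_right]
  rw [hsplit_left] at herr_left
  rw [hsplit_right] at herr_right
  constructor
  · -- divide by (d - c)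
    have key : E1 d - ((d - c) * G c / 6 + (d - c) * G d / 3)
        = ((d - c) * E1 d - (d - c) ^ 2 * (G c / 6 + G d / 3)) / (d - c) := by
      field_simp
    rw [key, abs_div, abs_of_pos hh]
    rw [div_le_iff₀ hh]
    calc |(d - c) * E1 d - (d - c) ^ 2 * (G c / 6 + G d / 3)| ≤ K * (d - c) ^ 4 / 24 :=
          herr_left
      _ = K * (d - c) ^ 3 / 24 * (d - c) := by ring
  · have key : E1 c + ((d - c) * G c / 3 + (d - c) * G d / 6)
        = -((-((d - c) * E1 c) - (d - c) ^ 2 * (G c / 3 + G d / 6)) / (d - c)) := by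
      field_simp; ring
    rw [key, abs_neg, abs_div, abs_of_pos hh]
    rw [div_le_iff₀ hh]
    calc |-((d - c) * E1 c) - (d - c) ^ 2 * (G c / 3 + G d / 6)| ≤ K * (d - c) ^ 4 / 24 :=
          herr_right
      _ = K * (d - c) ^ 3 / 24 * (d - c) := by ring


/-- Hall–Meyer Lemma, r = 2 case: if `e` is `C²` on `[a,b] = [t_0, t_n]`,
four times differentiable with `|e⁗| ≤ K` on each open subinterval of the partition,
vanishes at all knots, and satisfies the natural boundary condition `e''(a) = e''(b) = 0`,
then `|e''(t_k)| ≤ (1/4)·K·τ²` at every knot, where `τ` bounds the knot spacings. -/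
theorem hall_meyer_second_deriv_knot_bound (n : ℕ) (hn : 1 ≤ n) (t : ℕ → ℝ)
    (ht : ∀ k, 1 ≤ k → k ≤ n → t (k - 1) < t k)
    (τ : ℝ) (hτ : ∀ k, 1 ≤ k → k ≤ n → t k - t (k - 1) ≤ τ)
    (K : ℝ) (hK : 0 ≤ K) (e : ℝ → ℝ)
    (hC2 : ContDiffOn ℝ 2 e (Set.Icc (t 0) (t n)))
    (hdiff4 : ∀ k, 1 ≤ k → k ≤ n → ∀ s ∈ Set.Ioo (t (k - 1)) (t k),
      (∀ i < 4, DifferentiableAt ℝ (deriv^[i] e) s) ∧ |deriv^[4] e s| ≤ K)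
    (hknots : ∀ k ≤ n, e (t k) = 0)
    (hbda : iteratedDerivWithin 2 e (Set.Icc (t 0) (t n)) (t 0) = 0)
    (hbdb : iteratedDerivWithin 2 e (Set.Icc (t 0) (t n)) (t n) = 0) :
    ∀ k ≤ n, |iteratedDerivWithin 2 e (Set.Icc (t 0) (t n)) (t k)| ≤ (1 / 4) * K * τ ^ 2 := by
  -- basic ordering facts
  have hmono : ∀ i j, i ≤ j → j ≤ n → t i ≤ t j := by
    intro i j hij hjn
    induction j with
    | zero => simp_all
    | succ m ih =>
      rcases Nat.lt_or_ge i (m + 1) with h | h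
      · have h1 : t i ≤ t m := ih (by omega) (by omega)
        have h2 : t m < t (m + 1) := by
          have := ht (m + 1) (by omega) hjn
          simpa using this
        linarith
      · have : i = m + 1 := by omega
        rw [this]
  have hstrict : ∀ i j, i < j → j ≤ n → t i < t j := by
    intro i j hij hjn
    have h1 : t i ≤ t (j - 1) := hmono i (j - 1) (by omega) (by omega)
    have h2 : t (j - 1) < t j := ht j (by omega) hjn
    linarith
  have hab : t 0 < t n := hstrict 0 n (by omega) le_rfl
  set S := Set.Icc (t 0) (t n) with hS
  have hUD : UniqueDiffOn ℝ S := uniqueDiffOn_Icc hab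
  set G : ℝ → ℝ := iteratedDerivWithin 2 e S with hGdef
  set E1 : ℝ → ℝ := derivWithin e S with hE1def
  have hτpos : 0 < τ := by
    have := hτ 1 le_rfl hn
    have := ht 1 le_rfl hn
    simp only [Nat.sub_self] at *
    linarith
  have hRHS : (0:ℝ) ≤ 1 / 4 * K * τ ^ 2 := by positivity
  -- continuity
  have hGcont : ContinuousOn G S := hC2.continuousOn_iteratedDerivWithin (by norm_num) hUD
  have hE1cont : ContinuousOn E1 S := by
    have := hC2.continuousOn_iteratedDerivWithin (m := 1) (by norm_num) hUD
    apply this.congr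
    intro x hx
    rw [hE1def, iteratedDerivWithin_one]
  have hecont : ContinuousOn e S := hC2.continuousOn
  -- interior identities
  have hE1int : ∀ x ∈ Set.Ioo (t 0) (t n), E1 x = deriv e x := by
    intro x hx
    rw [hE1def, derivWithin_of_mem_nhds (Icc_mem_nhds hx.1 hx.2)]
  have hGint : ∀ x ∈ Set.Ioo (t 0) (t n), G x = deriv^[2] e x := by
    intro x hx
    have h1 : G x = derivWithin (iteratedDerivWithin 1 e S) S x := by
      rw [hGdef, iteratedDerivWithin_succ]
    rw [h1, derivWithin_of_mem_nhds (Icc_mem_nhds hx.1 hx.2)]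
    have heq : (iteratedDerivWithin 1 e S) =ᶠ[nhds x] deriv e := by
      filter_upwards [Ioo_mem_nhds hx.1 hx.2] with y hy
      rw [iteratedDerivWithin_one,
        derivWithin_of_mem_nhds (Icc_mem_nhds hy.1 hy.2)]
    rw [heq.deriv_eq, Function.iterate_succ_apply', Function.iterate_one]
  -- per-subinterval estimate
  have per : ∀ k, 1 ≤ k → k ≤ n →
      |E1 (t k) - ((t k - t (k - 1)) * G (t (k - 1)) / 6 + (t k - t (k - 1)) * G (t k) / 3)|
        ≤ K * (t k - t (k - 1)) ^ 3 / 24 ∧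
      |E1 (t (k - 1)) + ((t k - t (k - 1)) * G (t (k - 1)) / 3
          + (t k - t (k - 1)) * G (t k) / 6)| ≤ K * (t k - t (k - 1)) ^ 3 / 24 := by
    intro k hk1 hkn
    have hcd : t (k - 1) < t k := ht k hk1 hkn
    have hsub : Set.Icc (t (k - 1)) (t k) ⊆ S := by
      apply Set.Icc_subset_Icc (hmono 0 (k - 1) (by omega) (by omega)) (hmono k n hkn le_rfl)
    have hsubo : Set.Ioo (t (k - 1)) (t k) ⊆ Set.Ioo (t 0) (t n) := by
      apply Set.Ioo_subset_Ioo (hmono 0 (k - 1) (by omega) (by omega)) (hmono k n hkn le_rfl)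
    have hdiff := hdiff4 k hk1 hkn
    have hd1 : ∀ x ∈ Set.Ioo (t (k - 1)) (t k), HasDerivAt e (E1 x) x := by
      intro x hx
      have h0 : DifferentiableAt ℝ e x := by
        have := (hdiff x hx).1 0 (by norm_num)
        simpa using this
      rw [hE1int x (hsubo hx)]
      exact h0.hasDerivAt
    have hd2 : ∀ x ∈ Set.Ioo (t (k - 1)) (t k), HasDerivAt E1 (G x) x := by
      intro x hx
      have h1 : DifferentiableAt ℝ (deriv e) x := by
        have := (hdiff x hx).1 1 (by norm_num)
        simpa using this
      have : HasDerivAt (deriv e) (deriv (deriv e) x) x := h1.hasDerivAt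
      have h2 : HasDerivAt E1 (deriv (deriv e) x) x := by
        apply this.congr_of_eventuallyEq
        filter_upwards [Ioo_mem_nhds (hsubo hx).1 (hsubo hx).2] with y hy
        exact hE1int y hy
      have h3 : G x = deriv (deriv e) x := by
        rw [hGint x (hsubo hx), Function.iterate_succ_apply', Function.iterate_one]
      rw [h3]
      exact h2
    have hd3 : ∀ x ∈ Set.Ioo (t (k - 1)) (t k), HasDerivAt G (deriv^[3] e x) x := by
      intro x hx
      have h1 : DifferentiableAt ℝ (deriv^[2] e) x := (hdiff x hx).1 2 (by norm_num)
      have : HasDerivAt (deriv^[2] e) (deriv (deriv^[2] e) x) x := h1.hasDerivAt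
      have h2 : HasDerivAt G (deriv (deriv^[2] e) x) x := by
        apply this.congr_of_eventuallyEq
        filter_upwards [Ioo_mem_nhds (hsubo hx).1 (hsubo hx).2] with y hy
        exact hGint y hy
      rw [show deriv^[3] e x = deriv (deriv^[2] e) x from
        Function.iterate_succ_apply' deriv 2 e ▸ rfl]
      exact h2
    have hd4 : ∀ x ∈ Set.Ioo (t (k - 1)) (t k), HasDerivAt (deriv^[3] e) (deriv^[4] e x) x := by
      intro x hx
      have h1 : DifferentiableAt ℝ (deriv^[3] e) x := (hdiff x hx).1 3 (by norm_num)
      have := h1.hasDerivAt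
      rwa [show deriv (deriv^[3] e) x = deriv^[4] e x from
        (Function.iterate_succ_apply' deriv 3 e ▸ rfl : deriv^[4] e x = deriv (deriv^[3] e) x).symm] at this
    exact subinterval_est e E1 G (deriv^[3] e) (deriv^[4] e) (t (k - 1)) (t k) K hcd hK
      (hknots (k - 1) (by omega)) (hknots k hkn)
      (hecont.mono hsub) (hE1cont.mono hsub) (hGcont.mono hsub)
      hd1 hd2 hd3 hd4 (fun x hx => (hdiff x hx).2)
  -- the tridiagonal inequality at interior knots
  have tri : ∀ j, 1 ≤ j → j + 1 ≤ n →
      |(t j - t (j - 1)) * G (t (j - 1)) / 6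
        + ((t j - t (j - 1)) + (t (j + 1) - t j)) * G (t j) / 3
        + (t (j + 1) - t j) * G (t (j + 1)) / 6|
      ≤ K * ((t j - t (j - 1)) ^ 3 + (t (j + 1) - t j) ^ 3) / 24 := by
    intro j hj1 hjn
    have hL := (per j hj1 (by omega)).1
    have hR := (per (j + 1) (by omega) hjn).2
    simp only [Nat.add_sub_cancel] at hR
    set X := (t j - t (j - 1)) * G (t (j - 1)) / 6 + (t j - t (j - 1)) * G (t j) / 3 with hX
    set Y := (t (j + 1) - t j) * G (t j) / 3 + (t (j + 1) - t j) * G (t (j + 1)) / 6 with hY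
    have key : |X + Y| ≤ K * (t (j + 1) - t j) ^ 3 / 24 + K * (t j - t (j - 1)) ^ 3 / 24 := by
      have : X + Y = (E1 (t j) + Y) - (E1 (t j) - X) := by ring
      rw [this]
      exact le_trans (abs_sub (E1 (t j) + Y) (E1 (t j) - X)) (add_le_add hR hL)
    have heq : (t j - t (j - 1)) * G (t (j - 1)) / 6
        + ((t j - t (j - 1)) + (t (j + 1) - t j)) * G (t j) / 3
        + (t (j + 1) - t j) * G (t (j + 1)) / 6 = X + Y := by
      rw [hX, hY]; ring
    rw [heq]
    calc |X + Y| ≤ K * (t (j + 1) - t j) ^ 3 / 24 + K * (t j - t (j - 1)) ^ 3 / 24 := key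
      _ = K * ((t j - t (j - 1)) ^ 3 + (t (j + 1) - t j) ^ 3) / 24 := by ring
  -- maximum principle
  obtain ⟨j, hjmem, hjmax⟩ := (Finset.range (n + 1)).exists_max_image (fun k => |G (t k)|)
    ⟨0, Finset.mem_range.2 (by omega)⟩
  have hjn : j ≤ n := by simpa using Nat.lt_succ_iff.mp (Finset.mem_range.mp hjmem)
  have hmax : ∀ k ≤ n, |G (t k)| ≤ |G (t j)| := fun k hk =>
    hjmax k (Finset.mem_range.2 (by omega))
  have hMbound : |G (t j)| ≤ 1 / 4 * K * τ ^ 2 := by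
    rcases Nat.eq_zero_or_pos j with hj0 | hjpos
    · rw [hj0, hbda]
      simpa using hRHS
    rcases Nat.lt_or_ge j n with hjltn | hjgen
    · -- interior knot
      have h1 : 1 ≤ j := hjpos
      have h2 : j + 1 ≤ n := hjltn
      have htri := tri j h1 h2
      set h := t j - t (j - 1) with hh
      set h' := t (j + 1) - t j with hh'
      have hhpos : 0 < h := by
        have := ht j h1 (by omega); rw [hh]; linarith
      have hhpos' : 0 < h' := by
        have := ht (j + 1) (by omega) h2
        simp only [Nat.add_sub_cancel] at this
        rw [hh']; linarith
      have hhτ : h ≤ τ := hτ j h1 (by omega)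
      have hhτ' : h' ≤ τ := by
        have := hτ (j + 1) (by omega) h2
        simpa only [Nat.add_sub_cancel] using this
      set M := |G (t j)| with hM
      have hMl : |G (t (j - 1))| ≤ M := hmax (j - 1) (by omega)
      have hMr : |G (t (j + 1))| ≤ M := hmax (j + 1) h2
      have hMnn : 0 ≤ M := abs_nonneg _
      -- lower bound for |X+Y|
      have hlow : (h + h') * M / 3 - h * M / 6 - h' * M / 6 ≤
          |h * G (t (j - 1)) / 6 + (h + h') * G (t j) / 3 + h' * G (t (j + 1)) / 6| := by
        have e1 : |(h + h') * G (t j) / 3| = (h + h') * M / 3 := by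
          rw [abs_div, abs_mul, abs_of_pos (by linarith : (0:ℝ) < h + h')]
          simp [hM, abs_of_pos]
        have e2 : |h * G (t (j - 1)) / 6| ≤ h * M / 6 := by
          rw [abs_div, abs_mul, abs_of_pos hhpos]
          simp only [abs_of_pos (by norm_num : (0:ℝ) < 6)]
          apply div_le_div_of_nonneg_right _ (by norm_num)
          exact mul_le_mul_of_nonneg_left hMl hhpos.le
        have e3 : |h' * G (t (j + 1)) / 6| ≤ h' * M / 6 := by
          rw [abs_div, abs_mul, abs_of_pos hhpos']
          simp only [abs_of_pos (by norm_num : (0:ℝ) < 6)]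
          apply div_le_div_of_nonneg_right _ (by norm_num)
          exact mul_le_mul_of_nonneg_left hMr hhpos'.le
        calc (h + h') * M / 3 - h * M / 6 - h' * M / 6
            ≤ |(h + h') * G (t j) / 3| - |h * G (t (j - 1)) / 6| - |h' * G (t (j + 1)) / 6| := by
              rw [e1]; linarith
          _ ≤ |h * G (t (j - 1)) / 6 + (h + h') * G (t j) / 3 + h' * G (t (j + 1)) / 6| := by
              have := abs_add_le (h * G (t (j - 1)) / 6 + (h + h') * G (t j) / 3)
                (h' * G (t (j + 1)) / 6)
              have h4 := abs_add_le (h * G (t (j - 1)) / 6) ((h + h') * G (t j) / 3)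
              have h5 := abs_sub_abs_le_abs_sub ((h + h') * G (t j) / 3)
                (-(h * G (t (j - 1)) / 6))
              -- easier: direct triangle manipulation
              have t1 : |(h + h') * G (t j) / 3| ≤
                  |h * G (t (j - 1)) / 6 + (h + h') * G (t j) / 3| + |h * G (t (j - 1)) / 6| := by
                have := abs_add_le (h * G (t (j - 1)) / 6 + (h + h') * G (t j) / 3)
                  (-(h * G (t (j - 1)) / 6))
                simpa using this
              have t2 : |h * G (t (j - 1)) / 6 + (h + h') * G (t j) / 3| ≤
                  |h * G (t (j - 1)) / 6 + (h + h') * G (t j) / 3 + h' * G (t (j + 1)) / 6|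
                    + |h' * G (t (j + 1)) / 6| := by
                have := abs_add_le (h * G (t (j - 1)) / 6 + (h + h') * G (t j) / 3
                  + h' * G (t (j + 1)) / 6) (-(h' * G (t (j + 1)) / 6))
                simpa using this
              linarith
      have hup : (h + h') * M / 3 - h * M / 6 - h' * M / 6 ≤ K * (h ^ 3 + h' ^ 3) / 24 :=
        le_trans hlow htri
      -- conclude M ≤ K τ² / 4
      rw [hM] at *
      clear_value h h'
      have e1 : K * (h ^ 3 + h' ^ 3) ≤ K * τ ^ 2 * (h + h') := by
        nlinarith [mul_nonneg (mul_nonneg hK hhpos.le) (mul_nonneg (sub_nonneg.2 hhτ)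
            (by linarith : (0:ℝ) ≤ τ + h)),
          mul_nonneg (mul_nonneg hK hhpos'.le) (mul_nonneg (sub_nonneg.2 hhτ')
            (by linarith : (0:ℝ) ≤ τ + h'))]
      have hfin : |G (t j)| * (h + h') ≤ 1 / 4 * K * τ ^ 2 * (h + h') := by linarith
      exact le_of_mul_le_mul_right hfin (by linarith)
    · -- j = n
      have : j = n := by omega
      rw [this, hbdb]
      simpa using hRHS
  intro k hk
  exact le_trans (hmax k hk) hMbound
end

section
/- Let t_i < t_{i+1} be reals and K ≥ 0. Let v : [t_i, t_{i+1}] → ℝ be four times continuously differentiable with |v⁗(t)| ≤ K for all t ∈ [t_i, t_{i+1}]. Let u be the cubic Hermite interpolant of v, i.e., the unique polynomial of degree at most 3 with u(t_i) = v(t_i), u(t_{i+1}) = v(t_{i+1}), u'(t_i) = v'(t_i), u'(t_{i+1}) = v'(t_{i+1}). Then for every t ∈ [t_i, t_{i+1}], |v(t) − u(t)| ≤ K·[(t − t_i)(t_{i+1} − t)]²/24. -/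
private lemma rolle_aux {f f' : ℝ → ℝ} {lo hi a b : ℝ}
    (hcont : ContinuousOn f (Set.Icc lo hi))
    (hder : ∀ x ∈ Set.Ioo lo hi, HasDerivAt f (f' x) x)
    (ha : a ∈ Set.Icc lo hi) (hb : b ∈ Set.Icc lo hi) (hab : a < b)
    (hfa : f a = 0) (hfb : f b = 0) :
    ∃ c ∈ Set.Ioo a b, f' c = 0 := by
  refine exists_hasDerivAt_eq_zero hab (hcont.mono (Set.Icc_subset_Icc ha.1 hb.2))
    (hfa.trans hfb.symm) (fun x hx => hder x ?_)
  exact Set.Ioo_subset_Ioo ha.1 hb.2 hx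

/-- Birkhoff–Priver, r = 0 case: pointwise error bound for cubic Hermite
interpolation: if `v ∈ C⁴[t_i, t_{i+1}]` with `|v⁗| ≤ K` and `u` is the cubic Hermite
interpolant of `v`, then `|v(t) − u(t)| ≤ K·[(t − t_i)(t_{i+1} − t)]²/24` on `[t_i, t_{i+1}]`. -/
theorem hermite_error_bound (ti ti1 : ℝ) (h : ti < ti1) (K : ℝ) (hK : 0 ≤ K)
    (v : ℝ → ℝ)
    (hv : ContDiffOn ℝ 4 v (Set.Icc ti ti1))
    (hb : ∀ s ∈ Set.Icc ti ti1, |iteratedDerivWithin 4 v (Set.Icc ti ti1) s| ≤ K)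
    (u : Polynomial ℝ) (hdeg : u.degree ≤ 3)
    (h0 : u.eval ti = v ti) (h1 : u.eval ti1 = v ti1)
    (h0' : u.derivative.eval ti = derivWithin v (Set.Icc ti ti1) ti)
    (h1' : u.derivative.eval ti1 = derivWithin v (Set.Icc ti ti1) ti1) :
    ∀ s ∈ Set.Icc ti ti1, |v s - u.eval s| ≤ K * ((s - ti) * (ti1 - s)) ^ 2 / 24 := by
  intro t ht
  have hU : UniqueDiffOn ℝ (Set.Icc ti ti1) := uniqueDiffOn_Icc h
  rcases eq_or_lt_of_le ht.1 with h0t | h0t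
  · rw [← h0t]
    simp [h0]
  rcases eq_or_lt_of_le ht.2 with h1t | h1t
  · rw [h1t]
    simp [h1]
  -- now ti < t < ti1
  set f : ℕ → ℝ → ℝ := fun k => iteratedDerivWithin k v (Set.Icc ti ti1) with hf
  -- the weight function and its derivatives
  set w0 : ℝ → ℝ := fun x => ((x - ti) * (ti1 - x)) ^ 2 with hw0def
  set w1 : ℝ → ℝ := fun x => 2 * ((x - ti) * (ti1 - x)) * (ti + ti1 - 2 * x) with hw1def
  set w2 : ℝ → ℝ := fun x => 2 * (ti + ti1 - 2 * x) ^ 2 - 4 * ((x - ti) * (ti1 - x)) with hw2def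
  set w3 : ℝ → ℝ := fun x => -12 * (ti + ti1 - 2 * x) with hw3def
  have hw0t : 0 < w0 t := by
    have := mul_pos (sub_pos.2 h0t) (sub_pos.2 h1t)
    positivity
  set A : ℝ := (v t - u.eval t) / w0 t with hAdef
  -- derivative facts for w
  have hq : ∀ x : ℝ, HasDerivAt (fun x => (x - ti) * (ti1 - x)) (ti + ti1 - 2 * x) x := by
    intro x
    have := ((hasDerivAt_id x).sub_const ti).mul ((hasDerivAt_const x ti1).sub (hasDerivAt_id x))
    refine this.congr_deriv ?_; simp only [Pi.sub_apply, id_eq]; ring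
  have hw0' : ∀ x : ℝ, HasDerivAt w0 (w1 x) x := by
    intro x
    have := (hq x).pow 2
    refine this.congr_deriv ?_; simp only [hw1def]; norm_num
  have hw1' : ∀ x : ℝ, HasDerivAt w1 (w2 x) x := by
    intro x
    have := (((hq x).const_mul 2).mul
      (((hasDerivAt_const x (ti + ti1)).sub ((hasDerivAt_id x).const_mul 2))))
    refine this.congr_deriv ?_; simp only [hw2def, Pi.sub_apply, id_eq]; norm_num; ring
  have hw2' : ∀ x : ℝ, HasDerivAt w2 (w3 x) x := by
    intro x
    have := ((((hasDerivAt_const x (ti + ti1)).sub ((hasDerivAt_id x).const_mul 2)).pow 2).const_mul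
      2).sub ((hq x).const_mul 4)
    refine this.congr_deriv ?_; simp only [hw3def, Pi.sub_apply, id_eq]; norm_num; ring
  have hw3' : ∀ x : ℝ, HasDerivAt w3 24 x := by
    intro x
    have := ((hasDerivAt_const x (ti + ti1)).sub ((hasDerivAt_id x).const_mul 2)).const_mul (-12)
    refine this.congr_deriv ?_; norm_num
  -- derivative facts for f k at interior points
  have hfk : ∀ k : ℕ, k < 4 → ∀ x ∈ Set.Ioo ti ti1, HasDerivAt (f k) (f (k + 1) x) x := by
    intro k hk x hx
    have hd : DifferentiableOn ℝ (f k) (Set.Icc ti ti1) :=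
      hv.differentiableOn_iteratedDerivWithin (by exact_mod_cast hk) hU
    have h1 := (hd x (Set.Ioo_subset_Icc_self hx)).hasDerivWithinAt
    have h2 : derivWithin (f k) (Set.Icc ti ti1) x = f (k + 1) x :=
      (congrFun iteratedDerivWithin_succ x).symm
    rw [h2] at h1
    exact h1.hasDerivAt (Icc_mem_nhds hx.1 hx.2)
  have hfc : ∀ k : ℕ, k ≤ 4 → ContinuousOn (f k) (Set.Icc ti ti1) :=
    fun k hk => hv.continuousOn_iteratedDerivWithin (by exact_mod_cast hk) hU
  -- the G functions
  set G0 : ℝ → ℝ := fun x => f 0 x - u.eval x - A * w0 x with hG0def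
  set G1 : ℝ → ℝ := fun x => f 1 x - u.derivative.eval x - A * w1 x with hG1def
  set G2 : ℝ → ℝ := fun x => f 2 x - (Polynomial.derivative^[2] u).eval x - A * w2 x with hG2def
  set G3 : ℝ → ℝ := fun x => f 3 x - (Polynomial.derivative^[3] u).eval x - A * w3 x with hG3def
  set G4 : ℝ → ℝ := fun x => f 4 x - A * 24 with hG4def
  have hu4 : Polynomial.derivative^[4] u = 0 := by
    apply Polynomial.iterate_derivative_eq_zero
    have : u.natDegree ≤ 3 := Polynomial.natDegree_le_iff_degree_le.2 hdeg
    omega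
  -- derivatives of G
  have hG0' : ∀ x ∈ Set.Ioo ti ti1, HasDerivAt G0 (G1 x) x := fun x hx =>
    ((hfk 0 (by norm_num) x hx).sub (u.hasDerivAt x)).sub ((hw0' x).const_mul A)
  have hG1' : ∀ x ∈ Set.Ioo ti ti1, HasDerivAt G1 (G2 x) x := by
    intro x hx
    have hp : HasDerivAt (fun y => u.derivative.eval y)
        ((Polynomial.derivative^[2] u).eval x) x := by
      have := (u.derivative).hasDerivAt x
      rwa [show Polynomial.derivative^[2] u = Polynomial.derivative u.derivative from by
        rw [Function.iterate_succ_apply' Polynomial.derivative 1 u, Function.iterate_one]]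
    exact ((hfk 1 (by norm_num) x hx).sub hp).sub ((hw1' x).const_mul A)
  have hG2' : ∀ x ∈ Set.Ioo ti ti1, HasDerivAt G2 (G3 x) x := by
    intro x hx
    have hp : HasDerivAt (fun y => (Polynomial.derivative^[2] u).eval y)
        ((Polynomial.derivative^[3] u).eval x) x := by
      have := (Polynomial.derivative^[2] u).hasDerivAt x
      rwa [Function.iterate_succ_apply' Polynomial.derivative 2 u]
    exact ((hfk 2 (by norm_num) x hx).sub hp).sub ((hw2' x).const_mul A)
  have hG3' : ∀ x ∈ Set.Ioo ti ti1, HasDerivAt G3 (G4 x) x := by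
    intro x hx
    have hp : HasDerivAt (fun y => (Polynomial.derivative^[3] u).eval y) 0 x := by
      have := (Polynomial.derivative^[3] u).hasDerivAt x
      rw [(Function.iterate_succ_apply' Polynomial.derivative 3 u).symm, hu4] at this
      simpa using this
    have := ((hfk 3 (by norm_num) x hx).sub hp).sub ((hw3' x).const_mul A)
    refine this.congr_deriv ?_
    simp only [hG4def]
    ring
  -- continuity of G
  have hG0c : ContinuousOn G0 (Set.Icc ti ti1) :=
    (((hfc 0 (by norm_num)).sub u.continuous.continuousOn).sub
      (Continuous.continuousOn (by fun_prop)))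
  have hG1c : ContinuousOn G1 (Set.Icc ti ti1) :=
    (((hfc 1 (by norm_num)).sub (u.derivative).continuous.continuousOn).sub
      (Continuous.continuousOn (by fun_prop)))
  have hG2c : ContinuousOn G2 (Set.Icc ti ti1) :=
    (((hfc 2 (by norm_num)).sub (Polynomial.derivative^[2] u).continuous.continuousOn).sub
      (Continuous.continuousOn (by fun_prop)))
  have hG3c : ContinuousOn G3 (Set.Icc ti ti1) :=
    (((hfc 3 (by norm_num)).sub (Polynomial.derivative^[3] u).continuous.continuousOn).sub
      (Continuous.continuousOn (by fun_prop)))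
  -- zeros of G0
  have hf0 : ∀ x, f 0 x = v x := by intro x; simp [hf]
  have hG0ti : G0 ti = 0 := by simp [hG0def, hf0, h0, hw0def]
  have hG0ti1 : G0 ti1 = 0 := by simp [hG0def, hf0, h1, hw0def]
  have hG0t : G0 t = 0 := by
    simp only [hG0def, hf0, hAdef]
    field_simp
    ring
  -- zeros of G1 at endpoints
  have hf1 : ∀ x ∈ Set.Icc ti ti1, f 1 x = derivWithin v (Set.Icc ti ti1) x := by
    intro x hx; exact congrFun iteratedDerivWithin_one x
  have hG1ti : G1 ti = 0 := by
    have := hf1 ti (Set.left_mem_Icc.2 h.le)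
    simp [hG1def, this, ← h0', hw1def]
  have hG1ti1 : G1 ti1 = 0 := by
    have := hf1 ti1 (Set.right_mem_Icc.2 h.le)
    simp [hG1def, this, ← h1', hw1def]
  -- Rolle cascade
  have htiI : ti ∈ Set.Icc ti ti1 := Set.left_mem_Icc.2 h.le
  have hti1I : ti1 ∈ Set.Icc ti ti1 := Set.right_mem_Icc.2 h.le
  have htI : t ∈ Set.Icc ti ti1 := ht
  obtain ⟨a1, ha1, hGa1⟩ := rolle_aux hG0c hG0' htiI htI h0t hG0ti hG0t
  obtain ⟨b1, hb1, hGb1⟩ := rolle_aux hG0c hG0' htI hti1I h1t hG0t hG0ti1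
  have ha1I : a1 ∈ Set.Icc ti ti1 := ⟨ha1.1.le, ha1.2.le.trans ht.2⟩
  have hb1I : b1 ∈ Set.Icc ti ti1 := ⟨ht.1.trans hb1.1.le, hb1.2.le⟩
  have ha1b1 : a1 < b1 := ha1.2.trans hb1.1
  obtain ⟨c1, hc1, hGc1⟩ := rolle_aux hG1c hG1' htiI ha1I ha1.1 hG1ti hGa1
  obtain ⟨c2, hc2, hGc2⟩ := rolle_aux hG1c hG1' ha1I hb1I ha1b1 hGa1 hGb1
  obtain ⟨c3, hc3, hGc3⟩ := rolle_aux hG1c hG1' hb1I hti1I hb1.2 hGb1 hG1ti1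
  have hc1I : c1 ∈ Set.Icc ti ti1 := ⟨hc1.1.le, (hc1.2.trans_le ha1I.2).le⟩
  have hc2I : c2 ∈ Set.Icc ti ti1 := ⟨(ha1I.1.trans_lt hc2.1).le, (hc2.2.trans_le hb1I.2).le⟩
  have hc3I : c3 ∈ Set.Icc ti ti1 := ⟨(hb1I.1.trans_lt hc3.1).le, hc3.2.le⟩
  have hc1c2 : c1 < c2 := hc1.2.trans hc2.1
  have hc2c3 : c2 < c3 := hc2.2.trans hc3.1
  obtain ⟨d1, hd1, hGd1⟩ := rolle_aux hG2c hG2' hc1I hc2I hc1c2 hGc1 hGc2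
  obtain ⟨d2, hd2, hGd2⟩ := rolle_aux hG2c hG2' hc2I hc3I hc2c3 hGc2 hGc3
  have hd1I : d1 ∈ Set.Icc ti ti1 := ⟨(hc1I.1.trans_lt hd1.1).le, (hd1.2.trans_le hc2I.2).le⟩
  have hd2I : d2 ∈ Set.Icc ti ti1 := ⟨(hc2I.1.trans_lt hd2.1).le, (hd2.2.trans_le hc3I.2).le⟩
  have hd1d2 : d1 < d2 := hd1.2.trans hd2.1
  obtain ⟨ξ, hξ, hGξ⟩ := rolle_aux hG3c hG3' hd1I hd2I hd1d2 hGd1 hGd2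
  have hξI : ξ ∈ Set.Icc ti ti1 := ⟨(hd1I.1.trans_lt hξ.1).le, (hξ.2.trans_le hd2I.2).le⟩
  -- conclude
  have hf4 : f 4 ξ = A * 24 := by
    have : f 4 ξ - A * 24 = 0 := hGξ
    linarith
  have hAbound : |A| * 24 ≤ K := by
    have h5 : |f 4 ξ| ≤ K := hb ξ hξI
    rw [hf4, abs_mul] at h5
    simpa using h5
  have key : v t - u.eval t = A * w0 t := by
    rw [hAdef]; field_simp
  rw [key, abs_mul, abs_of_nonneg (le_of_lt hw0t)]
  have : |A| ≤ K / 24 := by linarith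
  calc |A| * w0 t ≤ (K / 24) * w0 t := by
        exact mul_le_mul_of_nonneg_right this hw0t.le
    _ = K * ((t - ti) * (ti1 - t)) ^ 2 / 24 := by rw [hw0def]; ring
end

section
/- Let t_i < t_{i+1} be reals, τ_i = t_{i+1} − t_i, and K ≥ 0. Let v : [t_i, t_{i+1}] → ℝ be four times continuously differentiable with |v⁗(t)| ≤ K for all t ∈ [t_i, t_{i+1}]. Let u be the cubic Hermite interpolant of v, i.e., the unique polynomial of degree at most 3 with u(t_i) = v(t_i), u(t_{i+1}) = v(t_{i+1}), u'(t_i) = v'(t_i), u'(t_{i+1}) = v'(t_{i+1}). Then for every t ∈ [t_i, t_{i+1}], |v'(t) − u'(t)| ≤ K·τ_i·(t − t_i)(t_{i+1} − t)/2. -/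
open Set Polynomial

lemma itdw_nhds {n : ℕ} {f : ℝ → ℝ} {s : Set ℝ} {x : ℝ} (hs : s ∈ nhds x) :
    iteratedDerivWithin n f s x = iteratedDeriv n f x := by
  rw [iteratedDerivWithin_eq_iteratedFDerivWithin, iteratedDeriv_eq_iteratedFDeriv,
    iteratedFDerivWithin_congr_set (Filter.eventuallyEq_univ.mpr hs) n,
    iteratedFDerivWithin_univ]

set_option maxHeartbeats 2000000 in
/-- Birkhoff–Priver, r = 1 case: pointwise first-derivative error bound for
cubic Hermite interpolation: if `v ∈ C⁴[t_i, t_{i+1}]` with `|v⁗| ≤ K` and `u` is the cubic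
Hermite interpolant of `v`, then `|v'(t) − u'(t)| ≤ K·τ_i·(t − t_i)(t_{i+1} − t)/2` on
`[t_i, t_{i+1}]`, where `τ_i = t_{i+1} − t_i`. -/
theorem hermite_deriv_error_bound (ti ti1 : ℝ) (h : ti < ti1) (K : ℝ) (hK : 0 ≤ K)
    (v : ℝ → ℝ)
    (hv : ContDiffOn ℝ 4 v (Set.Icc ti ti1))
    (hb : ∀ s ∈ Set.Icc ti ti1, |iteratedDerivWithin 4 v (Set.Icc ti ti1) s| ≤ K)
    (u : Polynomial ℝ) (hdeg : u.degree ≤ 3)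
    (h0 : u.eval ti = v ti) (h1 : u.eval ti1 = v ti1)
    (h0' : u.derivative.eval ti = derivWithin v (Set.Icc ti ti1) ti)
    (h1' : u.derivative.eval ti1 = derivWithin v (Set.Icc ti ti1) ti1) :
    ∀ s ∈ Set.Icc ti ti1,
      |derivWithin v (Set.Icc ti ti1) s - u.derivative.eval s| ≤
        K * (ti1 - ti) * ((s - ti) * (ti1 - s)) / 2 := by
  intro t ht
  have hτ : (0:ℝ) ≤ ti1 - ti := by linarith
  have hrhs : 0 ≤ K * (ti1 - ti) * ((t - ti) * (ti1 - t)) / 2 := by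
    have h1t : 0 ≤ t - ti := by linarith [ht.1]
    have h2t : 0 ≤ ti1 - t := by linarith [ht.2]
    positivity
  rcases eq_or_lt_of_le ht.1 with h't | h't
  · rw [← h't, ← h0', sub_self, abs_zero, sub_self, zero_mul, mul_zero, zero_div]
  rcases eq_or_lt_of_le ht.2 with h''t | h''t
  · rw [h''t, ← h1', sub_self, abs_zero, sub_self, mul_zero, mul_zero, zero_div]
  have htO : t ∈ Ioo ti ti1 := ⟨h't, h''t⟩
  -- Step A: Rolle for v - u gives ξ with v' ξ = u' ξ
  have hvAt : ∀ s ∈ Ioo ti ti1, DifferentiableAt ℝ v s := fun s hs =>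
    (hv.contDiffAt (Icc_mem_nhds hs.1 hs.2)).differentiableAt (by norm_num)
  have hdw : ∀ s ∈ Ioo ti ti1, derivWithin v (Set.Icc ti ti1) s = deriv v s := fun s hs =>
    derivWithin_of_mem_nhds (Icc_mem_nhds hs.1 hs.2)
  have hecont : ContinuousOn (fun s => v s - u.eval s) (Icc ti ti1) :=
    hv.continuousOn.sub u.continuous.continuousOn
  obtain ⟨ξ, hξO, hξ0⟩ := exists_deriv_eq_zero h hecont (by rw [← h0, ← h1]; ring)
  have hξeq : deriv v ξ = u.derivative.eval ξ := by
    have hd := ((hvAt ξ hξO).hasDerivAt.sub (u.hasDerivAt ξ)).deriv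
    rw [show (v - fun x => u.eval x) = (fun s => v s - u.eval s) from rfl, hξ0] at hd
    linarith [hd]
  rcases eq_or_ne t ξ with rfl | hne
  · rw [hdw t htO, hξeq, sub_self, abs_zero]; exact hrhs
  -- main case
  set q : Polynomial ℝ := (X - C ti) * (X - C ξ) * (X - C ti1) with hq_def
  have hqt : q.eval t = (t - ti) * (t - ξ) * (t - ti1) := by simp [hq_def]
  have hqt_ne : q.eval t ≠ 0 := by
    rw [hqt]
    have : t - ti ≠ 0 := by intro hh; apply absurd h't; linarith
    have h2 : t - ξ ≠ 0 := sub_ne_zero.mpr hne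
    have h3 : t - ti1 ≠ 0 := by intro hh; apply absurd h''t; linarith
    positivity
  set c : ℝ := (derivWithin v (Set.Icc ti ti1) t - u.derivative.eval t) / q.eval t with hc_def
  set r : Polynomial ℝ := u.derivative + C c * q with hr_def
  set E : ℝ → ℝ := fun s => derivWithin v (Set.Icc ti ti1) s - r.eval s with hE_def
  have hEti : E ti = 0 := by
    simp only [hE_def, hr_def, hq_def, eval_add, eval_mul, eval_sub, eval_X, eval_C, ← h0']
    ring
  have hEti1 : E ti1 = 0 := by
    simp only [hE_def, hr_def, hq_def, eval_add, eval_mul, eval_sub, eval_X, eval_C, ← h1']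
    ring
  have hEξ : E ξ = 0 := by
    simp only [hE_def, hr_def, hq_def, eval_add, eval_mul, eval_sub, eval_X, eval_C,
      hdw ξ hξO, hξeq]
    ring
  have hEt : E t = 0 := by
    simp only [hE_def, hr_def, eval_add, eval_mul, eval_C]
    rw [hc_def, div_mul_cancel₀ _ hqt_ne]
    ring
  have hEcont : ContinuousOn E (Icc ti ti1) :=
    (hv.continuousOn_derivWithin (uniqueDiffOn_Icc h) (by norm_num)).sub
      r.continuous.continuousOn
  set W1 : ℝ → ℝ := fun s => deriv v s - r.eval s with hW1_def
  set W2 : ℝ → ℝ := fun s => deriv (deriv v) s - r.derivative.eval s with hW2_def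
  set W3 : ℝ → ℝ := fun s => deriv (deriv (deriv v)) s - r.derivative.derivative.eval s
    with hW3_def
  have hEW1 : Set.EqOn E W1 (Ioo ti ti1) := fun s hs => by
    simp only [hE_def, hW1_def, hdw s hs]
  have hv1 : ContDiffOn ℝ 3 (deriv v) (Ioo ti ti1) :=
    (hv.mono Ioo_subset_Icc_self).deriv_of_isOpen (m := 3) isOpen_Ioo (by norm_num)
  have hv2 : ContDiffOn ℝ 2 (deriv (deriv v)) (Ioo ti ti1) :=
    hv1.deriv_of_isOpen (m := 2) isOpen_Ioo (by norm_num)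
  have hv3 : ContDiffOn ℝ 1 (deriv (deriv (deriv v))) (Ioo ti ti1) :=
    hv2.deriv_of_isOpen (m := 1) isOpen_Ioo (by norm_num)
  have hW1d : ∀ s ∈ Ioo ti ti1, HasDerivAt W1 (W2 s) s := fun s hs =>
    (((hv1.contDiffAt (isOpen_Ioo.mem_nhds hs)).differentiableAt
      (by norm_num)).hasDerivAt).sub (r.hasDerivAt s)
  have hW2d : ∀ s ∈ Ioo ti ti1, HasDerivAt W2 (W3 s) s := fun s hs =>
    (((hv2.contDiffAt (isOpen_Ioo.mem_nhds hs)).differentiableAt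
      (by norm_num)).hasDerivAt).sub (r.derivative.hasDerivAt s)
  have hW3d : ∀ s ∈ Ioo ti ti1, HasDerivAt W3
      (deriv (deriv (deriv (deriv v))) s - r.derivative.derivative.derivative.eval s) s :=
    fun s hs =>
    (((hv3.contDiffAt (isOpen_Ioo.mem_nhds hs)).differentiableAt
      (by norm_num)).hasDerivAt).sub (r.derivative.derivative.hasDerivAt s)
  -- four zeros of E: ti < a < b < ti1
  set a : ℝ := min t ξ with ha_def
  set b : ℝ := max t ξ with hb_def
  have hta : ti < a := lt_min htO.1 hξO.1
  have hab : a < b := min_lt_max.mpr hne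
  have hb1 : b < ti1 := max_lt htO.2 hξO.2
  have hEa : E a = 0 := by
    rcases le_total t ξ with h' | h'
    · rw [ha_def, min_eq_left h']; exact hEt
    · rw [ha_def, min_eq_right h']; exact hEξ
  have hEb : E b = 0 := by
    rcases le_total t ξ with h' | h'
    · rw [hb_def, max_eq_right h']; exact hEξ
    · rw [hb_def, max_eq_left h']; exact hEt
  -- first Rolle round: three zeros of W2
  have rolle1 : ∀ x y : ℝ, x < y → ti ≤ x → y ≤ ti1 → E x = 0 → E y = 0 →
      ∃ z ∈ Ioo x y, W2 z = 0 := by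
    intro x y hxy hx hy hEx hEy
    obtain ⟨z, hz, hz0⟩ := exists_deriv_eq_zero hxy
      (hEcont.mono (Icc_subset_Icc hx hy)) (hEx.trans hEy.symm)
    have hzO : z ∈ Ioo ti ti1 := ⟨lt_of_le_of_lt hx hz.1, lt_of_lt_of_le hz.2 hy⟩
    have heq : deriv E z = deriv W1 z :=
      Filter.EventuallyEq.deriv_eq (Filter.eventuallyEq_of_mem
        (isOpen_Ioo.mem_nhds hzO) hEW1)
    refine ⟨z, hz, ?_⟩
    rw [← (hW1d z hzO).deriv, ← heq, hz0]
  obtain ⟨y1, hy1, hy1'⟩ := rolle1 ti a hta le_rfl (by linarith) hEti hEa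
  obtain ⟨y2, hy2, hy2'⟩ := rolle1 a b hab (le_of_lt hta) (le_of_lt hb1) hEa hEb
  obtain ⟨y3, hy3, hy3'⟩ := rolle1 b ti1 hb1 (by linarith) le_rfl hEb hEti1
  have hy1O : y1 ∈ Ioo ti ti1 := ⟨hy1.1, by linarith [hy1.2, hab, hb1]⟩
  have hy2O : y2 ∈ Ioo ti ti1 := ⟨by linarith [hy2.1, hta], by linarith [hy2.2, hb1]⟩
  have hy3O : y3 ∈ Ioo ti ti1 := ⟨by linarith [hy3.1, hta, hab], hy3.2⟩
  -- second Rolle round: two zeros of W3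
  have rolle2 : ∀ x y : ℝ, x < y → ti < x → y < ti1 → W2 x = 0 → W2 y = 0 →
      ∃ z ∈ Ioo x y, W3 z = 0 := by
    intro x y hxy hx hy hWx hWy
    have hsub : Icc x y ⊆ Ioo ti ti1 := Icc_subset_Ioo hx hy
    have hcont : ContinuousOn W2 (Icc x y) :=
      ((hv2.continuousOn.sub r.derivative.continuous.continuousOn).mono hsub)
    obtain ⟨z, hz, hz0⟩ := exists_deriv_eq_zero hxy hcont (hWx.trans hWy.symm)
    have hzO : z ∈ Ioo ti ti1 := hsub ⟨le_of_lt hz.1, le_of_lt hz.2⟩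
    exact ⟨z, hz, by rw [← (hW2d z hzO).deriv, hz0]⟩
  obtain ⟨z1, hz1, hz1'⟩ := rolle2 y1 y2 (by linarith [hy1.2, hy2.1]) hy1O.1 hy2O.2 hy1' hy2'
  obtain ⟨z2, hz2, hz2'⟩ := rolle2 y2 y3 (by linarith [hy2.2, hy3.1]) hy2O.1 hy3O.2 hy2' hy3'
  have hz1O : z1 ∈ Ioo ti ti1 := ⟨by linarith [hz1.1, hy1O.1], by linarith [hz1.2, hy2O.2]⟩
  have hz2O : z2 ∈ Ioo ti ti1 := ⟨by linarith [hz2.1, hy2O.1], by linarith [hz2.2, hy3O.2]⟩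
  -- third Rolle round: the fourth derivative equals 6c somewhere
  obtain ⟨w, hw, hw0⟩ := by
    refine exists_deriv_eq_zero (f := W3) (by linarith [hz1.2, hz2.1] : z1 < z2) ?_
      (hz1'.trans hz2'.symm)
    have hsub : Icc z1 z2 ⊆ Ioo ti ti1 := Icc_subset_Ioo hz1O.1 hz2O.2
    exact (hv3.continuousOn.sub r.derivative.derivative.continuous.continuousOn).mono hsub
  have hwO : w ∈ Ioo ti ti1 := ⟨by linarith [hw.1, hz1O.1], by linarith [hw.2, hz2O.2]⟩
  have hr3 : r.derivative.derivative.derivative.eval w = 6 * c := by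
    have hu4 : derivative (derivative (derivative u.derivative)) = 0 := by
      have hnd : u.natDegree < 4 :=
        lt_of_le_of_lt (natDegree_le_iff_degree_le.mpr hdeg) (by norm_num)
      have := Polynomial.iterate_derivative_eq_zero (x := 4) hnd
      simpa [Function.iterate_succ_apply', Function.iterate_zero_apply] using this
    have hq3 : ∀ x : ℝ, q.derivative.derivative.derivative.eval x = 6 := by
      intro x
      simp [hq_def, Polynomial.derivative_mul]
      ring
    simp only [hr_def, map_add, derivative_C_mul, hu4, eval_add, eval_zero, eval_mul,
      eval_C, hq3, zero_add]
    ring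
  have h4d : deriv (deriv (deriv (deriv v))) w = 6 * c := by
    have := (hW3d w hwO).deriv
    rw [hw0] at this
    rw [hr3] at this
    linarith [this]
  have hbw := hb w (Ioo_subset_Icc_self hwO)
  have hiter : iteratedDerivWithin 4 v (Set.Icc ti ti1) w
      = deriv (deriv (deriv (deriv v))) w := by
    rw [itdw_nhds (Icc_mem_nhds hwO.1 hwO.2), iteratedDeriv_eq_iterate]
    simp [Function.iterate_succ_apply', Function.iterate_zero_apply]
  rw [hiter, h4d] at hbw
  have hc_bound : |c| ≤ K / 6 := by
    rw [abs_mul] at hbw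
    simp only [abs_of_pos (by norm_num : (0:ℝ) < 6)] at hbw
    linarith
  -- conclude
  have hmain : derivWithin v (Set.Icc ti ti1) t - u.derivative.eval t = c * q.eval t :=
    (div_mul_cancel₀ _ hqt_ne).symm
  rw [hmain, hqt]
  have hξd : |t - ξ| ≤ ti1 - ti := abs_sub_le_iff.mpr
    ⟨by linarith [htO.2, hξO.1], by linarith [hξO.2, htO.1]⟩
  have habs : |c * ((t - ti) * (t - ξ) * (t - ti1))|
      = |c| * ((t - ti) * |t - ξ| * (ti1 - t)) := by
    rw [abs_mul, abs_mul, abs_mul, abs_of_pos (by linarith : (0:ℝ) < t - ti),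
      abs_sub_comm t ti1, abs_of_pos (by linarith : (0:ℝ) < ti1 - t)]
  rw [habs]
  have h1t : (0:ℝ) < t - ti := by linarith
  have h2t : (0:ℝ) < ti1 - t := by linarith
  have hca : 0 ≤ |c| := abs_nonneg c
  have hta' : 0 ≤ |t - ξ| := abs_nonneg _
  nlinarith [mul_nonneg (mul_nonneg h1t.le h2t.le) hca,
    mul_nonneg (mul_nonneg h1t.le h2t.le) (sub_nonneg.mpr hξd),
    mul_le_mul_of_nonneg_right hc_bound (mul_nonneg (mul_nonneg h1t.le hta') h2t.le)]
end

section
/- Let a = t_0 < t_1 < … < t_n = b be a partition of [a, b] with maximum spacing τ = max_k (t_k − t_{k−1}), and let K ≥ 0. Let x : [a, b] → ℝ, o : [a, b] → ℝ, and let c : [a, b] → ℝ be piecewise cubic: on each [t_{k−1}, t_k], c agrees with a polynomial of degree at most 3. Set ô = o + c and e = x − ô. Assume: (i) e is twice continuously differentiable on [a, b]; (ii) on each open subinterval (t_{k−1}, t_k), x − o is four times differentiable with |(x − o)⁗(t)| ≤ K; (iii) e(t_k) = 0 for all 0 ≤ k ≤ n; (iv) e''(a) = e''(b) = 0. Then |x(t)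 − ô(t)| ≤ (5/384)·K·τ⁴ for all t ∈ [a, b]. -/
open Set Filter
namespace CSSC


/-- From three zeros of `G2`, via Rolle twice, a zero of `G4` in the open interval. -/
lemma exists_G4_zero {α β : ℝ} {G2 G3 G4 : ℝ → ℝ}
    (hG2c : ContinuousOn G2 (Icc α β))
    (hd2 : ∀ s ∈ Ioo α β, HasDerivAt G2 (G3 s) s)
    (hd3 : ∀ s ∈ Ioo α β, HasDerivAt G3 (G4 s) s)
    {p1 p2 p3 : ℝ} (h1 : α ≤ p1) (h2 : p1 < p2) (h3 : p2 < p3) (h4 : p3 ≤ β)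
    (hz1 : G2 p1 = 0) (hz2 : G2 p2 = 0) (hz3 : G2 p3 = 0) :
    ∃ ξ ∈ Ioo α β, G4 ξ = 0 := by
  have hsub1 : Icc p1 p2 ⊆ Icc α β := Icc_subset_Icc h1 (h3.le.trans h4)
  have hsub2 : Icc p2 p3 ⊆ Icc α β := Icc_subset_Icc (h1.trans h2.le) h4
  have hoo1 : Ioo p1 p2 ⊆ Ioo α β := Ioo_subset_Ioo h1 (h3.le.trans h4)
  have hoo2 : Ioo p2 p3 ⊆ Ioo α β := Ioo_subset_Ioo (h1.trans h2.le) h4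
  obtain ⟨z1, hz1m, hz1e⟩ := exists_hasDerivAt_eq_zero h2 (hG2c.mono hsub1)
    (hz1.trans hz2.symm) (fun x hx => hd2 x (hoo1 hx))
  obtain ⟨z2, hz2m, hz2e⟩ := exists_hasDerivAt_eq_zero h3 (hG2c.mono hsub2)
    (hz2.trans hz3.symm) (fun x hx => hd2 x (hoo2 hx))
  have hz12 : z1 < z2 := hz1m.2.trans hz2m.1
  have hsubI : Icc z1 z2 ⊆ Ioo α β := fun y hy =>
    ⟨h1.trans_lt (hz1m.1.trans_le hy.1), (hy.2.trans_lt hz2m.2).trans_le h4⟩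
  have hG3c : ContinuousOn G3 (Icc z1 z2) := fun y hy =>
    ((hd3 y (hsubI hy)).differentiableAt.continuousAt).continuousWithinAt
  obtain ⟨ξ, hξm, hξe⟩ := exists_hasDerivAt_eq_zero hz12 hG3c (hz1e.trans hz2e.symm)
    (fun x hx => hd3 x (hsubI (Ioo_subset_Icc_self hx)))
  exact ⟨ξ, hsubI (Ioo_subset_Icc_self hξm), hξe⟩



section Q
variable (α β : ℝ)

noncomputable def q0 : ℝ → ℝ := fun u => (u - α)^2 * (u - β)^2 / 24
noncomputable def q1 : ℝ → ℝ := fun u => ((u - α) * (u - β)^2 + (u - α)^2 * (u - β)) / 12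
noncomputable def q2 : ℝ → ℝ := fun u => ((u - β)^2 + 4*(u - α)*(u - β) + (u - α)^2) / 12
noncomputable def q3 : ℝ → ℝ := fun u => u - (α + β)/2

lemma hq0 (s : ℝ) : HasDerivAt (q0 α β) (q1 α β s) s := by
  have h := ((((hasDerivAt_id s).sub_const α).pow 2).mul
    (((hasDerivAt_id s).sub_const β).pow 2)).div_const 24
  refine h.congr_deriv ?_
  simp [q1]; ring

lemma hq1 (s : ℝ) : HasDerivAt (q1 α β) (q2 α β s) s := by
  have h := (((((hasDerivAt_id s).sub_const α).mul
      (((hasDerivAt_id s).sub_const β).pow 2)).add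
      ((((hasDerivAt_id s).sub_const α).pow 2).mul
      ((hasDerivAt_id s).sub_const β))).div_const 12)
  refine h.congr_deriv ?_
  simp [q2]; ring

lemma hq2 (s : ℝ) : HasDerivAt (q2 α β) (q3 α β s) s := by
  have h := (((((hasDerivAt_id s).sub_const β).pow 2).add
      (((hasDerivAt_const s (4:ℝ)).mul ((hasDerivAt_id s).sub_const α)).mul
        ((hasDerivAt_id s).sub_const β))).add
      (((hasDerivAt_id s).sub_const α).pow 2)).div_const 12
  refine h.congr_deriv ?_
  simp [q3]; ring

lemma hq3 (s : ℝ) : HasDerivAt (q3 α β) 1 s := by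
  exact (hasDerivAt_id s).sub_const ((α + β)/2)

lemma q0_cont : Continuous (q0 α β) := by unfold q0; fun_prop
lemma q1_cont : Continuous (q1 α β) := by unfold q1; fun_prop
lemma q2_cont : Continuous (q2 α β) := by unfold q2; fun_prop

lemma q0_α : q0 α β α = 0 := by simp [q0]
lemma q0_β : q0 α β β = 0 := by simp [q0]
lemma q1_α : q1 α β α = 0 := by simp [q1]
lemma q1_β : q1 α β β = 0 := by simp [q1]
lemma q2_α : q2 α β α = (β - α)^2 / 12 := by simp [q2]; ring
lemma q2_β : q2 α β β = (β - α)^2 / 12 := by simp [q2]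

end Q


variable {α β K : ℝ} {F F1 F2 F3 F4 : ℝ → ℝ}

lemma keyA (hαβ : α < β) (hK : 0 ≤ K)
    (hFc : ContinuousOn F (Icc α β)) (hF1c : ContinuousOn F1 (Icc α β))
    (hF2c : ContinuousOn F2 (Icc α β))
    (hd0 : ∀ s ∈ Ioo α β, HasDerivAt F (F1 s) s)
    (hd1 : ∀ s ∈ Ioo α β, HasDerivAt F1 (F2 s) s)
    (hd2 : ∀ s ∈ Ioo α β, HasDerivAt F2 (F3 s) s)
    (hd3 : ∀ s ∈ Ioo α β, HasDerivAt F3 (F4 s) s)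
    (hF4 : ∀ s ∈ Ioo α β, |F4 s| ≤ K)
    (hFα : F α = 0) (hFβ : F β = 0) (hF1α : F1 α = 0) (hF1β : F1 β = 0) :
    (∀ u ∈ Icc α β, |F u| ≤ K * (β - α)^4 / 384) ∧
      |F2 α| ≤ K * (β - α)^2 / 12 ∧ |F2 β| ≤ K * (β - α)^2 / 12 := by
  have hh : (0:ℝ) < β - α := sub_pos.mpr hαβ
  have main : ∀ lam : ℝ, ∀ p1 p2 p3 : ℝ, α ≤ p1 → p1 < p2 → p2 < p3 → p3 ≤ β →
      F2 p1 - lam * q2 α β p1 = 0 → F2 p2 - lam * q2 α β p2 = 0 →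
      F2 p3 - lam * q2 α β p3 = 0 → |lam| ≤ K := by
    intro lam p1 p2 p3 h1 h2 h3 h4 e1 e2 e3
    have hc : ContinuousOn (fun s => F2 s - lam * q2 α β s) (Icc α β) :=
      hF2c.sub ((continuous_const.mul (q2_cont α β)).continuousOn)
    obtain ⟨ξ, hξm, hξe⟩ := exists_G4_zero (G3 := fun s => F3 s - lam * q3 α β s)
      (G4 := fun s => F4 s - lam * 1) hc
      (fun s hs => (hd2 s hs).sub ((hq2 α β s).const_mul lam))
      (fun s hs => (hd3 s hs).sub ((hq3 α β s).const_mul lam))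
      h1 h2 h3 h4 e1 e2 e3
    have : F4 ξ = lam := by linarith [hξe]
    calc |lam| = |F4 ξ| := by rw [this]
    _ ≤ K := hF4 ξ hξm
  have bdry : ∀ lam : ℝ, ∃ z1 z2, α < z1 ∧ z1 < z2 ∧ z2 < β ∧
      F2 z1 - lam * q2 α β z1 = 0 ∧ F2 z2 - lam * q2 α β z2 = 0 := by
    intro lam
    have hG0c : ContinuousOn (fun s => F s - lam * q0 α β s) (Icc α β) :=
      hFc.sub ((continuous_const.mul (q0_cont α β)).continuousOn)
    have hG1c : ContinuousOn (fun s => F1 s - lam * q1 α β s) (Icc α β) :=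
      hF1c.sub ((continuous_const.mul (q1_cont α β)).continuousOn)
    have hG0d : ∀ s ∈ Ioo α β, HasDerivAt (fun s => F s - lam * q0 α β s)
        (F1 s - lam * q1 α β s) s := fun s hs => (hd0 s hs).sub ((hq0 α β s).const_mul lam)
    have hG1d : ∀ s ∈ Ioo α β, HasDerivAt (fun s => F1 s - lam * q1 α β s)
        (F2 s - lam * q2 α β s) s := fun s hs => (hd1 s hs).sub ((hq1 α β s).const_mul lam)
    have hG0α : F α - lam * q0 α β α = 0 := by rw [hFα, q0_α]; ring
    have hG0β : F β - lam * q0 α β β = 0 := by rw [hFβ, q0_β]; ring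
    obtain ⟨z, hzm, hze⟩ := exists_hasDerivAt_eq_zero hαβ hG0c (hG0α.trans hG0β.symm) hG0d
    have hG1α : F1 α - lam * q1 α β α = 0 := by rw [hF1α, q1_α]; ring
    have hG1β : F1 β - lam * q1 α β β = 0 := by rw [hF1β, q1_β]; ring
    obtain ⟨z1, hz1m, hz1e⟩ := exists_hasDerivAt_eq_zero hzm.1
      (hG1c.mono (Icc_subset_Icc le_rfl hzm.2.le)) (hG1α.trans hze.symm)
      (fun s hs => hG1d s (Ioo_subset_Ioo le_rfl hzm.2.le hs))
    obtain ⟨z2, hz2m, hz2e⟩ := exists_hasDerivAt_eq_zero hzm.2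
      (hG1c.mono (Icc_subset_Icc hzm.1.le le_rfl)) (hze.trans hG1β.symm)
      (fun s hs => hG1d s (Ioo_subset_Ioo hzm.1.le le_rfl hs))
    exact ⟨z1, z2, hz1m.1, hz1m.2.trans hz2m.1, hz2m.2, hz1e, hz2e⟩
  have hq2v : q2 α β α = (β - α)^2/12 := q2_α α β
  have hq2vβ : q2 α β β = (β - α)^2/12 := q2_β α β
  have h12 : (0:ℝ) < (β - α)^2/12 := by positivity
  refine ⟨?_, ?_, ?_⟩
  · -- interior bound
    intro u hu
    rcases eq_or_lt_of_le hu.1 with h | hau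
    · rw [← h, hFα]; simp; positivity
    rcases eq_or_lt_of_le hu.2 with h | hub
    · rw [h, hFβ]; simp; positivity
    have h1 : (0:ℝ) < u - α := sub_pos.mpr hau
    have h2 : (0:ℝ) < β - u := sub_pos.mpr hub
    have hq0pos : 0 < q0 α β u := by
      have h4 : q0 α β u = (u - α)^2 * (β - u)^2 / 24 := by simp only [q0]; ring
      rw [h4]
      exact div_pos (mul_pos (pow_pos h1 2) (pow_pos h2 2)) (by norm_num)
    set lam := F u / q0 α β u with hlam
    have hG0c : ContinuousOn (fun s => F s - lam * q0 α β s) (Icc α β) :=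
      hFc.sub ((continuous_const.mul (q0_cont α β)).continuousOn)
    have hG1c : ContinuousOn (fun s => F1 s - lam * q1 α β s) (Icc α β) :=
      hF1c.sub ((continuous_const.mul (q1_cont α β)).continuousOn)
    have hG0d : ∀ s ∈ Ioo α β, HasDerivAt (fun s => F s - lam * q0 α β s)
        (F1 s - lam * q1 α β s) s := fun s hs => (hd0 s hs).sub ((hq0 α β s).const_mul lam)
    have hG1d : ∀ s ∈ Ioo α β, HasDerivAt (fun s => F1 s - lam * q1 α β s)
        (F2 s - lam * q2 α β s) s := fun s hs => (hd1 s hs).sub ((hq1 α β s).const_mul lam)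
    have hG0α : F α - lam * q0 α β α = 0 := by rw [hFα, q0_α]; ring
    have hG0β : F β - lam * q0 α β β = 0 := by rw [hFβ, q0_β]; ring
    have hG0u : F u - lam * q0 α β u = 0 := by
      rw [hlam, div_mul_cancel₀ _ (ne_of_gt hq0pos)]; ring
    obtain ⟨r1, hr1m, hr1e⟩ := exists_hasDerivAt_eq_zero hau
      (hG0c.mono (Icc_subset_Icc le_rfl hu.2)) (hG0α.trans hG0u.symm)
      (fun s hs => hG0d s (Ioo_subset_Ioo le_rfl hu.2 hs))
    obtain ⟨r2, hr2m, hr2e⟩ := exists_hasDerivAt_eq_zero hub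
      (hG0c.mono (Icc_subset_Icc hu.1 le_rfl)) (hG0u.trans hG0β.symm)
      (fun s hs => hG0d s (Ioo_subset_Ioo hu.1 le_rfl hs))
    have hG1α : F1 α - lam * q1 α β α = 0 := by rw [hF1α, q1_α]; ring
    have hG1β : F1 β - lam * q1 α β β = 0 := by rw [hF1β, q1_β]; ring
    have hr12 : r1 < r2 := hr1m.2.trans hr2m.1
    have hr1β : r1 ≤ β := (hr1m.2.le.trans hu.2)
    have hr2α : α ≤ r2 := hu.1.trans hr2m.1.le
    obtain ⟨s1, hs1m, hs1e⟩ := exists_hasDerivAt_eq_zero hr1m.1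
      (hG1c.mono (Icc_subset_Icc le_rfl hr1β)) (hG1α.trans hr1e.symm)
      (fun s hs => hG1d s (Ioo_subset_Ioo le_rfl hr1β hs))
    obtain ⟨s2, hs2m, hs2e⟩ := exists_hasDerivAt_eq_zero hr12
      (hG1c.mono (Icc_subset_Icc hr1m.1.le hr2m.2.le)) (hr1e.trans hr2e.symm)
      (fun s hs => hG1d s (Ioo_subset_Ioo hr1m.1.le hr2m.2.le hs))
    obtain ⟨s3, hs3m, hs3e⟩ := exists_hasDerivAt_eq_zero hr2m.2
      (hG1c.mono (Icc_subset_Icc hr2α le_rfl)) (hr2e.trans hG1β.symm)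
      (fun s hs => hG1d s (Ioo_subset_Ioo hr2α le_rfl hs))
    have hlamK : |lam| ≤ K := main lam s1 s2 s3 hs1m.1.le
      (hs1m.2.trans hs2m.1) (hs2m.2.trans hs3m.1) hs3m.2.le hs1e hs2e hs3e
    have hFu : F u = lam * q0 α β u := by linarith [hG0u]
    have hq0le : q0 α β u ≤ (β - α)^4 / 384 := by
      simp only [q0]
      nlinarith [sq_nonneg ((u - α) - (β - u)), sq_nonneg ((u - α) + (β - u)),
        mul_pos h1 h2, sq_nonneg ((u-α)*(β-u)), sq_nonneg (u - α), sq_nonneg (β - u)]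
    calc |F u| = |lam| * q0 α β u := by
          rw [hFu, abs_mul, abs_of_pos hq0pos]
    _ ≤ K * ((β - α)^4 / 384) :=
          mul_le_mul hlamK hq0le hq0pos.le hK
    _ = K * (β - α)^4 / 384 := by ring
  · -- boundary at α
    set lam := F2 α / ((β - α)^2/12) with hlam
    obtain ⟨z1, z2, h1, h2, h3, e1, e2⟩ := bdry lam
    have hG2α : F2 α - lam * q2 α β α = 0 := by
      rw [hq2v, hlam, div_mul_cancel₀ _ (ne_of_gt h12)]; ring
    have hlamK : |lam| ≤ K := main lam α z1 z2 le_rfl h1 h2 h3.le hG2α e1 e2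
    have : F2 α = lam * ((β - α)^2/12) := by
      rw [hq2v] at hG2α; linarith
    calc |F2 α| = |lam| * ((β - α)^2/12) := by rw [this, abs_mul, abs_of_pos h12]
    _ ≤ K * ((β - α)^2/12) := mul_le_mul_of_nonneg_right hlamK h12.le
    _ = K * (β - α)^2 / 12 := by ring
  · -- boundary at β
    set lam := F2 β / ((β - α)^2/12) with hlam
    obtain ⟨z1, z2, h1, h2, h3, e1, e2⟩ := bdry lam
    have hG2β : F2 β - lam * q2 α β β = 0 := by
      rw [hq2vβ, hlam, div_mul_cancel₀ _ (ne_of_gt h12)]; ring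
    have hlamK : |lam| ≤ K := main lam z1 z2 β h1.le h2 h3 le_rfl e1 e2 hG2β
    have : F2 β = lam * ((β - α)^2/12) := by
      rw [hq2vβ] at hG2β; linarith
    calc |F2 β| = |lam| * ((β - α)^2/12) := by rw [this, abs_mul, abs_of_pos h12]
    _ ≤ K * ((β - α)^2/12) := mul_le_mul_of_nonneg_right hlamK h12.le
    _ = K * (β - α)^2 / 12 := by ring


section H
variable (α β δ1 δ2 : ℝ)

noncomputable def Hf : ℝ → ℝ := fun s => (δ1*(s-α)*(s-β)^2 + δ2*(s-α)^2*(s-β))/(β-α)^2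
noncomputable def Hf1 : ℝ → ℝ := fun s =>
  (δ1*((s-β)^2 + 2*(s-α)*(s-β)) + δ2*(2*(s-α)*(s-β) + (s-α)^2))/(β-α)^2
noncomputable def Hf2 : ℝ → ℝ := fun s =>
  (δ1*(6*s - 2*α - 4*β) + δ2*(6*s - 4*α - 2*β))/(β-α)^2

lemma hH0 (s : ℝ) : HasDerivAt (Hf α β δ1 δ2) (Hf1 α β δ1 δ2 s) s := by
  have h := ((((hasDerivAt_const s δ1).mul ((hasDerivAt_id s).sub_const α)).mul
      (((hasDerivAt_id s).sub_const β).pow 2)).add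
      (((hasDerivAt_const s δ2).mul (((hasDerivAt_id s).sub_const α).pow 2)).mul
      ((hasDerivAt_id s).sub_const β))).div_const ((β-α)^2)
  refine h.congr_deriv ?_
  simp [Hf1]; ring

lemma hH1 (s : ℝ) : HasDerivAt (Hf1 α β δ1 δ2) (Hf2 α β δ1 δ2 s) s := by
  have h := (((hasDerivAt_const s δ1).mul ((((hasDerivAt_id s).sub_const β).pow 2).add
      (((hasDerivAt_const s (2:ℝ)).mul ((hasDerivAt_id s).sub_const α)).mul
        ((hasDerivAt_id s).sub_const β)))).add
      ((hasDerivAt_const s δ2).mul ((((hasDerivAt_const s (2:ℝ)).mul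
        ((hasDerivAt_id s).sub_const α)).mul ((hasDerivAt_id s).sub_const β)).add
        (((hasDerivAt_id s).sub_const α).pow 2)))).div_const ((β-α)^2)
  refine h.congr_deriv ?_
  simp [Hf2]; ring

lemma hH2 (s : ℝ) : HasDerivAt (Hf2 α β δ1 δ2) ((6*δ1 + 6*δ2)/(β-α)^2) s := by
  have h := (((hasDerivAt_id s).const_mul (6*δ1 + 6*δ2)).div_const
    ((β-α)^2)).sub_const ((δ1*(2*α + 4*β) + δ2*(4*α + 2*β))/(β-α)^2)
  refine (h.congr_of_eventuallyEq (Filter.Eventually.of_forall fun u => ?_)).congr_deriv (by ring)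
  simp only [Hf2, id]; ring

lemma hH3 (s : ℝ) : HasDerivAt (fun _ : ℝ => (6*δ1 + 6*δ2)/(β-α)^2) 0 s :=
  hasDerivAt_const s _

lemma Hf_cont : Continuous (Hf α β δ1 δ2) := by unfold Hf; fun_prop
lemma Hf1_cont : Continuous (Hf1 α β δ1 δ2) := by unfold Hf1; fun_prop
lemma Hf2_cont : Continuous (Hf2 α β δ1 δ2) := by unfold Hf2; fun_prop

lemma Hf_α : Hf α β δ1 δ2 α = 0 := by simp [Hf]
lemma Hf_β : Hf α β δ1 δ2 β = 0 := by simp [Hf]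

lemma Hf1_α (h : α < β) : Hf1 α β δ1 δ2 α = δ1 := by
  have h0 : β - α ≠ 0 := ne_of_gt (sub_pos.mpr h)
  simp only [Hf1]; rw [div_eq_iff (pow_ne_zero 2 h0)]; ring

lemma Hf1_β (h : α < β) : Hf1 α β δ1 δ2 β = δ2 := by
  have h0 : β - α ≠ 0 := ne_of_gt (sub_pos.mpr h)
  simp only [Hf1]; rw [div_eq_iff (pow_ne_zero 2 h0)]; ring

lemma Hf2_α (h : α < β) : Hf2 α β δ1 δ2 α = -((4*δ1 + 2*δ2)/(β-α)) := by
  have h0 : β - α ≠ 0 := ne_of_gt (sub_pos.mpr h)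
  simp only [Hf2]; rw [← neg_div, div_eq_div_iff (pow_ne_zero 2 h0) h0]; ring

lemma Hf2_β (h : α < β) : Hf2 α β δ1 δ2 β = (2*δ1 + 4*δ2)/(β-α) := by
  have h0 : β - α ≠ 0 := ne_of_gt (sub_pos.mpr h)
  simp only [Hf2]; rw [div_eq_div_iff (pow_ne_zero 2 h0) h0]; ring

end H

/-- covering lemma -/
lemma cover (t : ℕ → ℝ) : ∀ n : ℕ, 1 ≤ n → (∀ k, 1 ≤ k → k ≤ n → t (k-1) ≤ t k) →
    ∀ s, t 0 ≤ s → s ≤ t n → ∃ k, 1 ≤ k ∧ k ≤ n ∧ t (k-1) ≤ s ∧ s ≤ t k := by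
  intro n
  induction n with
  | zero => omega
  | succ m ih =>
    intro _ hmono s hs1 hs2
    rcases le_or_gt s (t m) with h | h
    · by_cases hm : 1 ≤ m
      · obtain ⟨k, h1, h2, h3, h4⟩ := ih hm (fun k hk1 hk2 => hmono k hk1 (hk2.trans (Nat.le_succ m))) s hs1 h
        exact ⟨k, h1, h2.trans (Nat.le_succ m), h3, h4⟩
      · have hm0 : m = 0 := by omega
        subst hm0
        have h01 : t 0 ≤ t 1 := by simpa using hmono 1 le_rfl le_rfl
        exact ⟨1, le_rfl, le_rfl, by simpa using hs1, h.trans h01⟩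
    · exact ⟨m+1, by omega, le_rfl, by simpa using h.le, hs2⟩

end CSSC
set_option maxHeartbeats 4000000 in
open CSSC Set Filter in
/-- Theorem 2, r = 0 case: interpolation error bound of CSSC. With
`ô = o + c` where `c` is piecewise cubic on the partition, `e = x − ô` is `C²` on `[a,b]`,
`x − o` is four times differentiable with `|(x − o)⁗| ≤ K` on each open subinterval,
`e` vanishes at all knots and satisfies the natural boundary condition, then
`|x(t) − ô(t)| ≤ (5/384)·K·τ⁴` on `[a,b]`. -/
theorem cssc_error_bound (n : ℕ) (hn : 1 ≤ n) (t : ℕ → ℝ)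
    (ht : ∀ k, 1 ≤ k → k ≤ n → t (k - 1) < t k)
    (τ : ℝ) (hτ : ∀ k, 1 ≤ k → k ≤ n → t k - t (k - 1) ≤ τ)
    (K : ℝ) (hK : 0 ≤ K) (x o c : ℝ → ℝ)
    (hpc : ∀ k, 1 ≤ k → k ≤ n → ∃ p : Polynomial ℝ, p.degree ≤ 3 ∧
      ∀ s ∈ Set.Icc (t (k - 1)) (t k), c s = p.eval s)
    (hC2 : ContDiffOn ℝ 2 (fun s => x s - (o s + c s)) (Set.Icc (t 0) (t n)))
    (hdiff4 : ∀ k, 1 ≤ k → k ≤ n → ∀ s ∈ Set.Ioo (t (k - 1)) (t k),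
      (∀ i < 4, DifferentiableAt ℝ (deriv^[i] (fun r => x r - o r)) s) ∧
        |deriv^[4] (fun r => x r - o r) s| ≤ K)
    (hknots : ∀ k ≤ n, x (t k) - (o (t k) + c (t k)) = 0)
    (hbda : iteratedDerivWithin 2 (fun s => x s - (o s + c s)) (Set.Icc (t 0) (t n)) (t 0) = 0)
    (hbdb : iteratedDerivWithin 2 (fun s => x s - (o s + c s)) (Set.Icc (t 0) (t n)) (t n) = 0) :
    ∀ s ∈ Set.Icc (t 0) (t n), |x s - (o s + c s)| ≤ (5 / 384) * K * τ ^ 4 := by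
  set S := Set.Icc (t 0) (t n) with hS
  set E : ℝ → ℝ := fun s => x s - (o s + c s) with hE
  set Fo : ℝ → ℝ := fun r => x r - o r with hFo
  -- basic order facts
  have hmono0 : ∀ m : ℕ, m + 1 ≤ n → t m ≤ t (m+1) := by
    intro m hm
    have := ht (m+1) (by omega) hm
    simpa using this.le
  have hmono : ∀ j k : ℕ, j ≤ k → k ≤ n → t j ≤ t k := by
    intro j k hjk
    induction hjk with
    | refl => intro _; exact le_rfl
    | @step m h ih => intro hkn; exact (ih (by omega)).trans (hmono0 m hkn)
  have hab : t 0 < t n :=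
    (hmono 0 (n-1) (Nat.zero_le _) (by omega)).trans_lt (ht n hn le_rfl)
  have ht1 : t 0 < t 1 := by simpa using ht 1 le_rfl hn
  have hτ1 : t 1 - t 0 ≤ τ := by simpa using hτ 1 le_rfl hn
  have hτ0 : 0 ≤ τ := le_trans (by linarith) hτ1
  have hUD : UniqueDiffOn ℝ S := uniqueDiffOn_Icc hab
  set e1 : ℝ → ℝ := derivWithin E S with he1def
  set e2 : ℝ → ℝ := derivWithin e1 S with he2def
  have hec : ContinuousOn E S := hC2.continuousOn
  have he1c : ContinuousOn e1 S := hC2.continuousOn_derivWithin hUD (by norm_num)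
  have hC1' : ContDiffOn ℝ 1 e1 S := hC2.derivWithin hUD (by norm_num)
  have he2c : ContinuousOn e2 S := hC1'.continuousOn_derivWithin hUD le_rfl
  have ht0S : t 0 ∈ S := left_mem_Icc.mpr hab.le
  have htnS : t n ∈ S := right_mem_Icc.mpr hab.le
  have he_knot : ∀ k ≤ n, E (t k) = 0 := fun k hk => hknots k hk
  -- boundary values of e2
  have hbd : ∀ y ∈ S, iteratedDerivWithin 2 E S y = e2 y := by
    intro y hy
    have h1 : iteratedDerivWithin 2 E S y = derivWithin (iteratedDerivWithin 1 E S) S y :=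
      congrFun iteratedDerivWithin_succ y
    have h2 : derivWithin (iteratedDerivWithin 1 E S) S y = derivWithin e1 S y :=
      derivWithin_congr (fun z hz => congrFun iteratedDerivWithin_one z)
        (congrFun iteratedDerivWithin_one y)
    rw [h1, h2]
  have he2a : e2 (t 0) = 0 := by rw [← hbd (t 0) ht0S]; exact hbda
  have he2b : e2 (t n) = 0 := by rw [← hbd (t n) htnS]; exact hbdb
  -- interior identities
  have hediff : ∀ y ∈ Ioo (t 0) (t n), DifferentiableAt ℝ E y := fun y hy =>
    (hC2.differentiableOn (by norm_num)).differentiableAt (Icc_mem_nhds hy.1 hy.2)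
  have he1eq : ∀ y ∈ Ioo (t 0) (t n), e1 y = deriv E y := fun y hy =>
    derivWithin_of_mem_nhds (Icc_mem_nhds hy.1 hy.2)
  have he2eq : ∀ y ∈ Ioo (t 0) (t n), e2 y = deriv^[2] E y := by
    intro y hy
    have h1 : e2 y = deriv e1 y := derivWithin_of_mem_nhds (Icc_mem_nhds hy.1 hy.2)
    have h2 : e1 =ᶠ[nhds y] deriv E :=
      eventuallyEq_of_mem (Ioo_mem_nhds hy.1 hy.2) (fun z hz => he1eq z hz)
    rw [h1, h2.deriv_eq]
    simp [Function.iterate_succ_apply']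
  clear_value S E Fo e1 e2
  -- per-interval estimates
  have interval : ∀ k : ℕ, 1 ≤ k → k ≤ n →
      (∀ u ∈ Icc (t (k-1)) (t k),
          |E u - Hf (t (k-1)) (t k) (e1 (t (k-1))) (e1 (t k)) u|
            ≤ K * (t k - t (k-1))^4 / 384) ∧
        |e2 (t (k-1)) + (4 * e1 (t (k-1)) + 2 * e1 (t k)) / (t k - t (k-1))|
          ≤ K * (t k - t (k-1))^2 / 12 ∧
        |e2 (t k) - (2 * e1 (t (k-1)) + 4 * e1 (t k)) / (t k - t (k-1))|
          ≤ K * (t k - t (k-1))^2 / 12 := by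
    intro k hk1 hkn
    obtain ⟨p, hpdeg, hpeq⟩ := hpc k hk1 hkn
    have hαβ : t (k-1) < t k := ht k hk1 hkn
    set α := t (k-1) with hα
    set β := t k with hβ
    set δ1 := e1 α with hδ1
    set δ2 := e1 β with hδ2
    have hsubI : Icc α β ⊆ S := by
      rw [hS]
      exact Icc_subset_Icc (hmono 0 (k-1) (Nat.zero_le _) (by omega)) (hmono k n hkn le_rfl)
    have hooI : Ioo α β ⊆ Ioo (t 0) (t n) :=
      Ioo_subset_Ioo (hmono 0 (k-1) (Nat.zero_le _) (by omega)) (hmono k n hkn le_rfl)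
    -- translation of derivatives of E to those of Fo minus polynomial
    have htr : ∀ i : ℕ, i ≤ 4 → ∀ y ∈ Ioo α β,
        deriv^[i] E y = deriv^[i] Fo y - Polynomial.eval y ((⇑Polynomial.derivative)^[i] p) := by
      intro i
      induction i with
      | zero =>
        intro _ y hy
        have h := hpeq y (Ioo_subset_Icc_self hy)
        simp only [Function.iterate_zero, id, hE, hFo]
        rw [h]; ring
      | succ i ih =>
        intro hi4 y hy
        have hEq : deriv^[i] E =ᶠ[nhds y]
            fun z => deriv^[i] Fo z - Polynomial.eval z ((⇑Polynomial.derivative)^[i] p) :=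
          eventuallyEq_of_mem (Ioo_mem_nhds hy.1 hy.2) (fun z hz => ih (by omega) z hz)
        have hdFo : DifferentiableAt ℝ (deriv^[i] Fo) y := (hdiff4 k hk1 hkn y hy).1 i (by omega)
        have hdQ : DifferentiableAt ℝ
            (fun z => Polynomial.eval z ((⇑Polynomial.derivative)^[i] p)) y :=
          (Polynomial.differentiable _).differentiableAt
        calc deriv^[i+1] E y = deriv (deriv^[i] E) y := by rw [Function.iterate_succ_apply']
        _ = deriv (fun z => deriv^[i] Fo z
              - Polynomial.eval z ((⇑Polynomial.derivative)^[i] p)) y := hEq.deriv_eq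
        _ = deriv (deriv^[i] Fo) y
              - deriv (fun z => Polynomial.eval z ((⇑Polynomial.derivative)^[i] p)) y :=
            deriv_sub hdFo hdQ
        _ = deriv^[i+1] Fo y - Polynomial.eval y ((⇑Polynomial.derivative)^[i+1] p) := by
            rw [Function.iterate_succ_apply', Polynomial.deriv, Function.iterate_succ_apply']
    have hdiffE : ∀ i : ℕ, i ≤ 3 → ∀ y ∈ Ioo α β, DifferentiableAt ℝ (deriv^[i] E) y := by
      intro i hi y hy
      have hEq : deriv^[i] E =ᶠ[nhds y]
          fun z => deriv^[i] Fo z - Polynomial.eval z ((⇑Polynomial.derivative)^[i] p) :=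
        eventuallyEq_of_mem (Ioo_mem_nhds hy.1 hy.2) (fun z hz => htr i (by omega) z hz)
      exact (((hdiff4 k hk1 hkn y hy).1 i (by omega)).sub
        ((Polynomial.differentiable _).differentiableAt)).congr_of_eventuallyEq hEq
    have hasD : ∀ i : ℕ, i ≤ 3 → ∀ y ∈ Ioo α β,
        HasDerivAt (deriv^[i] E) (deriv^[i+1] E y) y := by
      intro i hi y hy
      rw [Function.iterate_succ_apply']
      exact (hdiffE i hi y hy).hasDerivAt
    have hd0 : ∀ y ∈ Ioo α β, HasDerivAt E (e1 y) y := by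
      intro y hy
      have h := hasD 0 (by omega) y hy
      simp only [Function.iterate_zero, Function.iterate_one, id] at h
      rw [he1eq y (hooI hy)]
      exact h
    have hd1 : ∀ y ∈ Ioo α β, HasDerivAt e1 (e2 y) y := by
      intro y hy
      have h := hasD 1 (by omega) y hy
      simp only [Function.iterate_one] at h
      have hEq : e1 =ᶠ[nhds y] deriv E :=
        eventuallyEq_of_mem (Ioo_mem_nhds (hooI hy).1 (hooI hy).2) (fun z hz => he1eq z hz)
      have h2 := h.congr_of_eventuallyEq hEq
      rw [he2eq y (hooI hy)]
      exact h2
    have hd2 : ∀ y ∈ Ioo α β, HasDerivAt e2 (deriv^[3] E y) y := by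
      intro y hy
      have h := hasD 2 (by omega) y hy
      have hEq : e2 =ᶠ[nhds y] deriv^[2] E :=
        eventuallyEq_of_mem (Ioo_mem_nhds (hooI hy).1 (hooI hy).2) (fun z hz => he2eq z hz)
      exact h.congr_of_eventuallyEq hEq
    have hd3 : ∀ y ∈ Ioo α β, HasDerivAt (deriv^[3] E) (deriv^[4] E y) y :=
      fun y hy => hasD 3 le_rfl y hy
    have hb4 : ∀ y ∈ Ioo α β, |deriv^[4] E y| ≤ K := by
      intro y hy
      have h := htr 4 le_rfl y hy
      have hz : (⇑Polynomial.derivative)^[4] p = 0 :=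
        Polynomial.iterate_derivative_eq_zero
          (by
            have h3 : p.natDegree ≤ 3 :=
              Polynomial.natDegree_le_iff_degree_le.mpr (by exact_mod_cast hpdeg)
            omega)
      rw [h, hz]
      simpa using (hdiff4 k hk1 hkn y hy).2
    -- apply keyA
    have hkey := keyA (F := fun u => E u - Hf α β δ1 δ2 u)
      (F1 := fun u => e1 u - Hf1 α β δ1 δ2 u)
      (F2 := fun u => e2 u - Hf2 α β δ1 δ2 u)
      (F3 := fun u => deriv^[3] E u - (6*δ1 + 6*δ2)/(β-α)^2)
      (F4 := fun u => deriv^[4] E u)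
      hαβ hK
      ((hec.mono hsubI).sub (Hf_cont α β δ1 δ2).continuousOn)
      ((he1c.mono hsubI).sub (Hf1_cont α β δ1 δ2).continuousOn)
      ((he2c.mono hsubI).sub (Hf2_cont α β δ1 δ2).continuousOn)
      (fun y hy => (hd0 y hy).sub (hH0 α β δ1 δ2 y))
      (fun y hy => (hd1 y hy).sub (hH1 α β δ1 δ2 y))
      (fun y hy => (hd2 y hy).sub (hH2 α β δ1 δ2 y))
      (fun y hy => (hd3 y hy).sub_const _)
      (fun y hy => hb4 y hy)
      (by show E α - Hf α β δ1 δ2 α = 0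
          rw [Hf_α, hα, he_knot (k-1) (by omega)]; ring)
      (by show E β - Hf α β δ1 δ2 β = 0
          rw [Hf_β, hβ, he_knot k hkn]; ring)
      (by show e1 α - Hf1 α β δ1 δ2 α = 0
          rw [Hf1_α α β δ1 δ2 hαβ, hδ1]; exact sub_self _)
      (by show e1 β - Hf1 α β δ1 δ2 β = 0
          rw [Hf1_β α β δ1 δ2 hαβ, hδ2]; exact sub_self _)
    obtain ⟨hint, hba, hbb⟩ := hkey
    refine ⟨fun u hu => hint u hu, ?_, ?_⟩
    · have h : |e2 α - Hf2 α β δ1 δ2 α| ≤ K * (β-α)^2/12 := hba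
      rw [Hf2_α α β δ1 δ2 hαβ] at h
      convert h using 2
      ring
    · have h : |e2 β - Hf2 α β δ1 δ2 β| ≤ K * (β-α)^2/12 := hbb
      rw [Hf2_β α β δ1 δ2 hαβ] at h
      exact h
  -- bound on |e1 (t k)| at all knots
  have hknotbd : ∀ k ≤ n, |e1 (t k)| ≤ K * τ^3 / 24 := by
    obtain ⟨m, hmmem, hmmax⟩ := Finset.exists_max_image (Finset.range (n+1))
      (fun k => |e1 (t k)|) ⟨0, by simp⟩
    have hmn : m ≤ n := by have := Finset.mem_range.mp hmmem; omega
    have hmax : ∀ j, j ≤ n → |e1 (t j)| ≤ |e1 (t m)| := fun j hj =>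
      hmmax j (Finset.mem_range.mpr (by omega))
    suffices hM : |e1 (t m)| ≤ K * τ^3/24 by
      intro k hk; exact (hmax k hk).trans hM
    by_cases hm0 : m = 0
    · subst hm0
      obtain ⟨-, h2, -⟩ := interval 1 le_rfl hn
      rw [show (1:ℕ)-1 = 0 by norm_num] at h2
      rw [he2a, zero_add] at h2
      have hh : (0:ℝ) < t 1 - t 0 := sub_pos.mpr ht1
      rw [abs_div, abs_of_pos hh, div_le_iff₀ hh] at h2
      have hb1 : |e1 (t 1)| ≤ |e1 (t 0)| := hmax 1 hn
      have habs : 4*|e1 (t 0)| ≤ |4*e1 (t 0) + 2*e1 (t 1)| + 2*|e1 (t 1)| := by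
        have h := abs_add_le (4*e1 (t 0) + 2*e1 (t 1)) (-(2*e1 (t 1)))
        rw [show 4*e1 (t 0) + 2*e1 (t 1) + -(2*e1 (t 1)) = 4*e1 (t 0) by ring] at h
        have e4 : |4*e1 (t 0)| = 4*|e1 (t 0)| := by rw [abs_mul]; simp
        have e2' : |-(2*e1 (t 1))| = 2*|e1 (t 1)| := by rw [abs_neg, abs_mul]; simp
        rw [e4, e2'] at h
        linarith
      have hcube : K*(t 1 - t 0)^2/12*(t 1 - t 0) ≤ K*τ^3/12 := by
        have h3 : (t 1 - t 0)^3 ≤ τ^3 := pow_le_pow_left₀ hh.le hτ1 3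
        nlinarith [mul_le_mul_of_nonneg_left h3 hK]
      linarith
    by_cases hmn' : m = n
    · rw [hmn']
      obtain ⟨-, -, h2⟩ := interval n hn le_rfl
      rw [he2b, zero_sub, abs_neg] at h2
      have hh : (0:ℝ) < t n - t (n-1) := sub_pos.mpr (ht n hn le_rfl)
      rw [abs_div, abs_of_pos hh, div_le_iff₀ hh] at h2
      have hb1 : |e1 (t (n-1))| ≤ |e1 (t n)| := by
        have := hmax (n-1) (by omega)
        rw [hmn'] at this
        exact this
      have habs : 4*|e1 (t n)| ≤ |2*e1 (t (n-1)) + 4*e1 (t n)| + 2*|e1 (t (n-1))| := by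
        have h := abs_add_le (2*e1 (t (n-1)) + 4*e1 (t n)) (-(2*e1 (t (n-1))))
        rw [show 2*e1 (t (n-1)) + 4*e1 (t n) + -(2*e1 (t (n-1))) = 4*e1 (t n) by ring] at h
        have e4 : |4*e1 (t n)| = 4*|e1 (t n)| := by rw [abs_mul]; simp
        have e2' : |-(2*e1 (t (n-1)))| = 2*|e1 (t (n-1))| := by rw [abs_neg, abs_mul]; simp
        rw [e4, e2'] at h
        linarith
      have hτn : t n - t (n-1) ≤ τ := hτ n hn le_rfl
      have hcube : K*(t n - t (n-1))^2/12*(t n - t (n-1)) ≤ K*τ^3/12 := by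
        have h3 : (t n - t (n-1))^3 ≤ τ^3 := pow_le_pow_left₀ hh.le hτn 3
        nlinarith [mul_le_mul_of_nonneg_left h3 hK]
      linarith
    · -- interior knot
      have hm1 : 1 ≤ m := by omega
      have hm2 : m + 1 ≤ n := by omega
      obtain ⟨-, -, hL⟩ := interval m hm1 (by omega)
      obtain ⟨-, hR, -⟩ := interval (m+1) (by omega) hm2
      simp only [Nat.add_sub_cancel] at hR
      have hh1 : (0:ℝ) < t m - t (m-1) := sub_pos.mpr (ht m hm1 (by omega))
      have hh2 : (0:ℝ) < t (m+1) - t m := by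
        have := ht (m+1) (by omega) hm2
        simpa using sub_pos.mpr this
      have hτa : t m - t (m-1) ≤ τ := hτ m hm1 (by omega)
      have hτb : t (m+1) - t m ≤ τ := by
        have := hτ (m+1) (by omega) hm2
        simpa using this
      set a := e1 (t (m-1)) with ha
      set b := e1 (t m) with hb
      set c' := e1 (t (m+1)) with hc'
      set u := e2 (t m) with hu
      set p := t m - t (m-1) with hp
      set r := t (m+1) - t m with hr
      -- clear denominators
      have hL2 : |u*p - (2*a+4*b)| ≤ K*p^2/12*p := by
        have h := mul_le_mul_of_nonneg_right hL hh1.le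
        calc |u*p - (2*a+4*b)| = |(u - (2*a+4*b)/p) * p| := by
              rw [sub_mul, div_mul_cancel₀ _ (ne_of_gt hh1)]
        _ = |u - (2*a+4*b)/p| * p := by rw [abs_mul (u - (2*a+4*b)/p) p, abs_of_pos hh1]
        _ ≤ K*p^2/12*p := h
      have hR2 : |u*r + (4*b+2*c')| ≤ K*r^2/12*r := by
        have h := mul_le_mul_of_nonneg_right hR hh2.le
        calc |u*r + (4*b+2*c')| = |(u + (4*b+2*c')/r) * r| := by
              rw [add_mul, div_mul_cancel₀ _ (ne_of_gt hh2)]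
        _ = |u + (4*b+2*c')/r| * r := by rw [abs_mul (u + (4*b+2*c')/r) r, abs_of_pos hh2]
        _ ≤ K*r^2/12*r := h
      have hcomb : |r*(2*a+4*b) + p*(4*b+2*c')| ≤ K*p^3*r/12 + K*r^3*p/12 := by
        have hA : |(u*p - (2*a+4*b))*r| ≤ K*p^2/12*p*r := by
          rw [abs_mul (u*p - (2*a+4*b)) r, abs_of_pos hh2]
          exact mul_le_mul_of_nonneg_right hL2 hh2.le
        have hB : |(u*r + (4*b+2*c'))*p| ≤ K*r^2/12*r*p := by
          rw [abs_mul (u*r + (4*b+2*c')) p, abs_of_pos hh1]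
          exact mul_le_mul_of_nonneg_right hR2 hh1.le
        calc |r*(2*a+4*b) + p*(4*b+2*c')|
            = |((u*r + (4*b+2*c'))*p) - ((u*p - (2*a+4*b))*r)| := by congr 1; ring
        _ ≤ |(u*r + (4*b+2*c'))*p| + |(u*p - (2*a+4*b))*r| := abs_sub _ _
        _ ≤ K*r^2/12*r*p + K*p^2/12*p*r := add_le_add hB hA
        _ = K*p^3*r/12 + K*r^3*p/12 := by ring
      have h4b : 4*(p+r)*|b| ≤ |r*(2*a+4*b) + p*(4*b+2*c')| + 2*r*|a| + 2*p*|c'| := by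
        have h := abs_add_le (r*(2*a+4*b) + p*(4*b+2*c')) (-(2*r*a) + -(2*p*c'))
        rw [show r*(2*a+4*b) + p*(4*b+2*c') + (-(2*r*a) + -(2*p*c'))
            = 4*(p+r)*b by ring] at h
        have e4 : |4*(p+r)*b| = 4*(p+r)*|b| := by
          rw [abs_mul, abs_of_pos (by positivity : (0:ℝ) < 4*(p+r))]
        have e5 : |(-(2*r*a) + -(2*p*c'))| ≤ 2*r*|a| + 2*p*|c'| := by
          refine (abs_add_le _ _).trans ?_
          have g1 : |-(2*r*a)| = 2*r*|a| := by
            rw [abs_neg, abs_mul (2*r) a, abs_of_pos (by positivity : (0:ℝ) < 2*r)]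
          have g2 : |-(2*p*c')| = 2*p*|c'| := by
            rw [abs_neg, abs_mul (2*p) c', abs_of_pos (by positivity : (0:ℝ) < 2*p)]
          rw [g1, g2]
        rw [e4] at h
        linarith
      have hab' : |a| ≤ |b| := hmax (m-1) (by omega)
      have hcb : |c'| ≤ |b| := hmax (m+1) hm2
      clear_value a b c' u p r
      have m1 : 2*r*|a| ≤ 2*r*|b| := mul_le_mul_of_nonneg_left hab' (by positivity)
      have m2 : 2*p*|c'| ≤ 2*p*|b| := mul_le_mul_of_nonneg_left hcb (by positivity)
      have hkey : 2*(p+r)*|b| ≤ K*p*r*(p^2+r^2)/12 := by nlinarith [h4b, hcomb, m1, m2]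
      have hpoly : p*r*(p^2+r^2) ≤ τ^3*(p+r) := by
        have e1' : p^2 + r^2 ≤ τ*(p+r) := by
          nlinarith [mul_nonneg (sub_nonneg.mpr hτa) hh1.le,
            mul_nonneg (sub_nonneg.mpr hτb) hh2.le]
        have e2' : p*r ≤ τ^2 := by
          nlinarith [mul_le_mul hτa hτb hh2.le (le_trans hh1.le hτa)]
        nlinarith [mul_le_mul e2' e1' (by positivity) (by nlinarith [le_trans hh1.le hτa] :
          (0:ℝ) ≤ τ^2)]
      have m3 : K*(p*r*(p^2+r^2))/12 ≤ K*(τ^3*(p+r))/12 := by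
        have := mul_le_mul_of_nonneg_left hpoly (by positivity : (0:ℝ) ≤ K/12)
        nlinarith [this]
      nlinarith [hkey, m3, abs_nonneg b, add_pos hh1 hh2]
  -- final assembly
  intro s₀ hs₀
  rw [hS] at hs₀
  obtain ⟨k, hk1, hkn, hsk1, hsk2⟩ := cover t n hn
    (fun j hj1 hj2 => (ht j hj1 hj2).le) s₀ hs₀.1 hs₀.2
  obtain ⟨hint, -, -⟩ := interval k hk1 hkn
  have hαβ : t (k-1) < t k := ht k hk1 hkn
  have hh : (0:ℝ) < t k - t (k-1) := sub_pos.mpr hαβ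
  have hhτ : t k - t (k-1) ≤ τ := hτ k hk1 hkn
  have hδ1 : |e1 (t (k-1))| ≤ K*τ^3/24 := hknotbd (k-1) (by omega)
  have hδ2 : |e1 (t k)| ≤ K*τ^3/24 := hknotbd k hkn
  have h1 := hint s₀ ⟨hsk1, hsk2⟩
  set D := K*τ^3/24 with hD
  clear_value D
  have hDpos : 0 ≤ D := by rw [hD]; positivity
  have hp : 0 ≤ s₀ - t (k-1) := sub_nonneg.mpr hsk1
  have hr : 0 ≤ t k - s₀ := sub_nonneg.mpr hsk2
  obtain ⟨hδ1l, hδ1u⟩ := abs_le.mp hδ1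
  obtain ⟨hδ2l, hδ2u⟩ := abs_le.mp hδ2
  have hsum : (s₀ - t (k-1)) + (t k - s₀) = t k - t (k-1) := by ring
  have t4 : 4*((s₀ - t (k-1))*(t k - s₀)) ≤ (t k - t (k-1))^2 := by
    nlinarith [sq_nonneg ((s₀ - t (k-1)) - (t k - s₀))]
  have u1 : D*(t k - t (k-1))*(4*((s₀ - t (k-1))*(t k - s₀)))
      ≤ D*(t k - t (k-1))*((t k - t (k-1))^2) :=
    mul_le_mul_of_nonneg_left t4 (mul_nonneg hDpos hh.le)
  have u2 : D*((t k - t (k-1))^2)*(t k - t (k-1)) ≤ D*((t k - t (k-1))^2)*τ :=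
    mul_le_mul_of_nonneg_left hhτ (mul_nonneg hDpos (sq_nonneg _))
  have hHb : |Hf (t (k-1)) (t k) (e1 (t (k-1))) (e1 (t k)) s₀| ≤ D*τ/4 := by
    have t1 : e1 (t (k-1))*((s₀ - t (k-1))*(t k - s₀)^2)
        ≤ D*((s₀ - t (k-1))*(t k - s₀)^2) :=
      mul_le_mul_of_nonneg_right hδ1u (by positivity)
    have t1' : -(D*((s₀ - t (k-1))*(t k - s₀)^2))
        ≤ e1 (t (k-1))*((s₀ - t (k-1))*(t k - s₀)^2) := by
      linarith [mul_le_mul_of_nonneg_right hδ1l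
        (by positivity : (0:ℝ) ≤ (s₀ - t (k-1))*(t k - s₀)^2)]
    have t2 : e1 (t k)*((s₀ - t (k-1))^2*(t k - s₀))
        ≤ D*((s₀ - t (k-1))^2*(t k - s₀)) :=
      mul_le_mul_of_nonneg_right hδ2u (by positivity)
    have t2' : -(D*((s₀ - t (k-1))^2*(t k - s₀)))
        ≤ e1 (t k)*((s₀ - t (k-1))^2*(t k - s₀)) := by
      linarith [mul_le_mul_of_nonneg_right hδ2l
        (by positivity : (0:ℝ) ≤ (s₀ - t (k-1))^2*(t k - s₀))]
    rw [abs_le]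
    constructor
    · show -(D*τ/4) ≤ Hf (t (k-1)) (t k) (e1 (t (k-1))) (e1 (t k)) s₀
      simp only [Hf]
      rw [le_div_iff₀ (pow_pos hh 2)]
      nlinarith [t1', t2', u1, u2]
    · show Hf (t (k-1)) (t k) (e1 (t (k-1))) (e1 (t k)) s₀ ≤ D*τ/4
      simp only [Hf]
      rw [div_le_iff₀ (pow_pos hh 2)]
      nlinarith [t1, t2, u1, u2]
  have hτ4 : K*(t k - t (k-1))^4/384 ≤ K*τ^4/384 := by
    have h4 : (t k - t (k-1))^4 ≤ τ^4 := pow_le_pow_left₀ hh.le hhτ 4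
    nlinarith [mul_le_mul_of_nonneg_left h4 hK]
  have habs : |E s₀| ≤ |Hf (t (k-1)) (t k) (e1 (t (k-1))) (e1 (t k)) s₀|
      + |E s₀ - Hf (t (k-1)) (t k) (e1 (t (k-1))) (e1 (t k)) s₀| := by
    calc |E s₀| = |Hf (t (k-1)) (t k) (e1 (t (k-1))) (e1 (t k)) s₀
        + (E s₀ - Hf (t (k-1)) (t k) (e1 (t (k-1))) (e1 (t k)) s₀)| := by congr 1; ring
    _ ≤ _ := abs_add_le _ _
  have hfin : |E s₀| ≤ D*τ/4 + K*τ^4/384 := by linarith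
  have hee : D*τ/4 + K*τ^4/384 = 5/384*K*τ^4 := by rw [hD]; ring
  have goal' : |E s₀| ≤ 5/384*K*τ^4 := by linarith
  rw [hE] at goal'
  simpa using goal'
end
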